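/- arXiv:2509.14334 — 6 statements merged into one kernel-verified Lean document; each statement's English description precedes it below -/
import Mathlib

section
/- For every integer n ≥ 1, the central binomial coefficient ratio r_n = (1/4^n) * C(2n, n) satisfies 1/(π(n + 4/π - 1)) ≤ r_n² ≤ 1/(π(n + 1/4)). -/
open Real

noncomputable def r (n : ℕ) : ℝ := (Nat.choose (2 * n) n : ℝ) / 4 ^ n

open Filter Topology

lemma r_pos (n : ℕ) : 0 < r n := by
  unfold r
  have : 0 < Nat.choose (2 * n) n := Nat.choose_pos (by omega)
  positivity

lemma r_succ (n : ℕ) : r (n + 1) = r n * ((2 * n + 1) / (2 * n + 2)) := by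
  have h := Nat.succ_mul_centralBinom_succ n
  have h' : ((n : ℝ) + 1) * Nat.choose (2 * (n + 1)) (n + 1)
      = 2 * (2 * n + 1) * Nat.choose (2 * n) n := by
    have := congrArg (Nat.cast : ℕ → ℝ) h
    push_cast [Nat.centralBinom] at this
    push_cast
    linarith
  unfold r
  have hn1 : (n : ℝ) + 1 ≠ 0 := by positivity
  have h4 : (4 : ℝ) ^ n ≠ 0 := by positivity
  rw [pow_succ]
  field_simp
  linear_combination 2 * h'

lemma key (n : ℕ) : Real.Wallis.W n * (r n) ^ 2 * (2 * n + 1) = 1 := by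
  induction n with
  | zero => simp [Real.Wallis.W, r]
  | succ n ih =>
    rw [Real.Wallis.W_succ, r_succ]
    have h1 : (2 * (n : ℝ) + 1) ≠ 0 := by positivity
    have h2 : (2 * (n : ℝ) + 2) ≠ 0 := by positivity
    have h3 : (2 * (n : ℝ) + 3) ≠ 0 := by positivity
    push_cast
    field_simp
    linear_combination (2 * (n : ℝ) + 3) * ih

lemma tendsto_key : Tendsto (fun n : ℕ => (r n) ^ 2 * (2 * n + 1)) atTop (𝓝 (2 / π)) := by
  have h : ∀ n : ℕ, (r n) ^ 2 * (2 * n + 1) = (Real.Wallis.W n)⁻¹ := by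
    intro n
    have hk := key n
    have hW := Real.Wallis.W_pos n
    field_simp
    linarith [hk]
  simp_rw [h]
  have : (2 : ℝ) / π = (π / 2)⁻¹ := by rw [inv_div]
  rw [this]
  exact (Real.Wallis.tendsto_W_nhds_pi_div_two).inv₀ (ne_of_gt Real.pi_div_two_pos)

lemma tendsto_aux (c : ℝ) :
    Tendsto (fun n : ℕ => ((n : ℝ) + c) / ((n : ℝ) + 1 / 2)) atTop (𝓝 1) := by
  have h1 : Tendsto (fun n : ℕ => ((n : ℝ) + 1 / 2)) atTop atTop :=
    tendsto_atTop_add_const_right _ _ tendsto_natCast_atTop_atTop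
  have h2 : Tendsto (fun n : ℕ => (c - 1 / 2) / ((n : ℝ) + 1 / 2)) atTop (𝓝 0) :=
    tendsto_const_nhds.div_atTop h1
  have h3 : Tendsto (fun n : ℕ => 1 + (c - 1 / 2) / ((n : ℝ) + 1 / 2)) atTop (𝓝 (1 + 0)) :=
    tendsto_const_nhds.add h2
  rw [add_zero] at h3
  refine h3.congr' ?_
  filter_upwards [eventually_ge_atTop 0] with n _
  have hn : ((n : ℝ) + 1 / 2) ≠ 0 := by positivity
  field_simp
  ring

lemma tendsto_e (c : ℝ) :
    Tendsto (fun n : ℕ => π * (r n) ^ 2 * ((n : ℝ) + c)) atTop (𝓝 1) := by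
  have h := ((tendsto_key.const_mul (π / 2)).mul (tendsto_aux c))
  have heq : (π / 2) * (2 / π) * 1 = 1 := by
    field_simp
  rw [heq] at h
  refine h.congr ?_
  intro n
  have hn : ((n : ℝ) + 1 / 2) ≠ 0 := by positivity
  field_simp

lemma e_mono : Monotone (fun n : ℕ => π * (r n) ^ 2 * ((n : ℝ) + 1 / 4)) := by
  apply monotone_nat_of_le_succ
  intro n
  have hr := r_pos n
  have hpi := Real.pi_pos
  have h0 : 0 < π * (r n) ^ 2 := by positivity
  have h2 : (0 : ℝ) < (2 * (n : ℝ) + 2) ^ 2 := by positivity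
  have step : π * (r n) ^ 2 * ((n : ℝ) + 1 / 4) * (2 * (n : ℝ) + 2) ^ 2
      ≤ π * (r (n + 1)) ^ 2 * (((n : ℕ) + 1 : ℝ) + 1 / 4) * (2 * (n : ℝ) + 2) ^ 2 := by
    have hexp : π * (r (n + 1)) ^ 2 * (((n : ℕ) + 1 : ℝ) + 1 / 4) * (2 * (n : ℝ) + 2) ^ 2
        = π * (r n) ^ 2 * ((2 * (n : ℝ) + 1) ^ 2 * (((n : ℝ) + 1) + 1 / 4)) := by
      rw [r_succ]
      have hne : (2 * (n : ℝ) + 2) ≠ 0 := by positivity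
      push_cast
      field_simp
    rw [hexp]
    nlinarith [h0]
  have hfin := le_of_mul_le_mul_right step h2
  push_cast
  linarith

lemma g_anti' (a : ℝ) (ha : 3 / 11 ≤ a) (n : ℕ) (hn : 2 ≤ n) :
    π * (r (n + 1)) ^ 2 * ((n : ℝ) + 1 + a) ≤ π * (r n) ^ 2 * ((n : ℝ) + a) := by
  have hr := r_pos n
  have hpi := Real.pi_pos
  have h0 : 0 < π * (r n) ^ 2 := by positivity
  have h2 : (0 : ℝ) < (2 * (n : ℝ) + 2) ^ 2 := by positivity
  have hn' : (2 : ℝ) ≤ n := by exact_mod_cast hn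
  have hpoly : (2 * (n : ℝ) + 1) ^ 2 * (((n : ℝ) + 1) + a) ≤ (2 * (n : ℝ) + 2) ^ 2 * ((n : ℝ) + a) := by
    nlinarith [mul_nonneg (by linarith : (0 : ℝ) ≤ 4 * a - 1) (by linarith : (0 : ℝ) ≤ (n : ℝ) - 2)]
  have step : π * (r (n + 1)) ^ 2 * ((n : ℝ) + 1 + a) * (2 * (n : ℝ) + 2) ^ 2
      ≤ π * (r n) ^ 2 * ((n : ℝ) + a) * (2 * (n : ℝ) + 2) ^ 2 := by
    have hexp : π * (r (n + 1)) ^ 2 * ((n : ℝ) + 1 + a) * (2 * (n : ℝ) + 2) ^ 2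
        = π * (r n) ^ 2 * ((2 * (n : ℝ) + 1) ^ 2 * (((n : ℝ) + 1) + a)) := by
      rw [r_succ]
      have hne : (2 * (n : ℝ) + 2) ≠ 0 := by positivity
      field_simp
    rw [hexp]
    nlinarith [mul_le_mul_of_nonneg_left hpoly (le_of_lt h0)]
  exact le_of_mul_le_mul_right step h2

lemma g_anti (n : ℕ) (hn : 2 ≤ n) :
    π * (r (n + 1)) ^ 2 * ((n : ℝ) + 1 + (4 / π - 1)) ≤ π * (r n) ^ 2 * ((n : ℝ) + (4 / π - 1)) := by
  apply g_anti' _ _ n hn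
  have hpi := Real.pi_pos
  have hpi2 : π < 3.141593 := Real.pi_lt_d6
  have h4pi : (14 : ℝ) / 11 ≤ 4 / π := by
    rw [le_div_iff₀ hpi]
    linarith
  linarith

theorem wallis_chen_qi (n : ℕ) (hn : 1 ≤ n) :
    1 / (π * (n + 4 / π - 1)) ≤ (r n) ^ 2 ∧ (r n) ^ 2 ≤ 1 / (π * (n + 1 / 4)) := by
  have hpi := Real.pi_pos
  have hpi4 : π < 4 := by linarith [Real.pi_lt_d6]
  have hr := r_pos n
  have hn' : (1 : ℝ) ≤ n := by exact_mod_cast hn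
  have hden1 : 0 < (n : ℝ) + 4 / π - 1 := by
    have : 0 < 4 / π := by positivity
    linarith
  have hden2 : 0 < (n : ℝ) + 1 / 4 := by linarith
  constructor
  · -- lower bound: g n ≥ 1
    have hg : 1 ≤ π * (r n) ^ 2 * ((n : ℝ) + (4 / π - 1)) := by
      rcases eq_or_lt_of_le hn with h1 | h2
      · -- n = 1
        have hh : n = 1 := h1.symm
        subst hh
        have hr1 : r 1 = 1 / 2 := by norm_num [r]
        rw [hr1]
        have h1eq : π * ((1 : ℝ) / 2) ^ 2 * (((1 : ℕ) : ℝ) + (4 / π - 1)) = 1 := by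
          push_cast
          field_simp
          ring
        rw [h1eq]
      · -- n ≥ 2 : antitone tail with limit 1
        have hn2 : 2 ≤ n := h2
        have hanti : Antitone (fun k : ℕ => π * (r (k + 2)) ^ 2 * ((k : ℝ) + 2 + (4 / π - 1))) := by
          apply antitone_nat_of_succ_le
          intro k
          have h := g_anti (k + 2) (by omega)
          have e : k + 1 + 2 = k + 2 + 1 := by omega
          calc π * r (k + 1 + 2) ^ 2 * (((k + 1 : ℕ) : ℝ) + 2 + (4 / π - 1))
              = π * r (k + 2 + 1) ^ 2 * (((k + 2 : ℕ) : ℝ) + 1 + (4 / π - 1)) := by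
                rw [e]; push_cast; ring
            _ ≤ π * r (k + 2) ^ 2 * (((k + 2 : ℕ) : ℝ) + (4 / π - 1)) := by
                push_cast; push_cast at h; convert h using 2
            _ = π * r (k + 2) ^ 2 * ((k : ℝ) + 2 + (4 / π - 1)) := by push_cast; ring
        have hlim : Tendsto (fun k : ℕ => π * (r (k + 2)) ^ 2 * ((k : ℝ) + 2 + (4 / π - 1)))
            atTop (𝓝 1) := by
          have h := (tendsto_e (4 / π - 1)).comp (tendsto_add_atTop_nat 2)
          refine h.congr ?_
          intro k
          simp only [Function.comp]
          push_cast
          ring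
        have hfin := hanti.le_of_tendsto hlim (n - 2)
        have heq : (n - 2) + 2 = n := by omega
        rw [heq] at hfin
        have hcast : ((n - 2 : ℕ) : ℝ) + 2 = (n : ℝ) := by
          have : ((n - 2 : ℕ) : ℝ) = (n : ℝ) - 2 := by
            push_cast [Nat.cast_sub hn2]
            ring
          rw [this]; ring
        rw [hcast] at hfin
        exact hfin
    rw [div_le_iff₀ (by positivity)]
    have heq2 : (n : ℝ) + 4 / π - 1 = (n : ℝ) + (4 / π - 1) := by ring
    rw [heq2]
    nlinarith
  · -- upper bound: e n ≤ 1
    have he : π * (r n) ^ 2 * ((n : ℝ) + 1 / 4) ≤ 1 :=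
      e_mono.ge_of_tendsto (tendsto_e (1 / 4)) n
    rw [le_div_iff₀ (by positivity)]
    nlinarith
end

section
/- The improper integral ∫_0^{π/2} (1/sin(x) − 1/x) dx equals log(4/π). -/
open Real Set Filter Topology intervalIntegral

noncomputable def Fcsc (x : ℝ) : ℝ :=
  Real.log (Real.sin (x/2)) - Real.log (x/2) - Real.log (Real.cos (x/2)) - Real.log 2

-- bounds on the integrand near 0
lemma csc_bounds {x : ℝ} (hx : x ∈ Set.Icc (0:ℝ) 1) :
    0 ≤ 1 / Real.sin x - 1 / x ∧ 1 / Real.sin x - 1 / x ≤ x := by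
  rcases eq_or_lt_of_le hx.1 with h0 | h0
  · simp [← h0]
  have hx1 : x ≤ 1 := hx.2
  have hsl : Real.sin x < x := Real.sin_lt h0
  have hcube : x - x ^ 3 / 4 < Real.sin x := by have := Real.sin_gt_sub_cube h0; nlinarith [pow_pos h0 3]
  have hx3 : x ^ 3 ≤ x := by nlinarith [mul_nonneg (mul_nonneg h0.le (sub_nonneg.2 hx1)) (by linarith : (0:ℝ) ≤ 1 + x)]
  have hslb : 3 * x / 4 ≤ Real.sin x := by nlinarith
  have hspos : 0 < Real.sin x := by nlinarith
  constructor
  · rw [sub_nonneg]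
    exact one_div_le_one_div_of_le hspos hsl.le
  · have heq : 1 / Real.sin x - 1 / x = (x - Real.sin x) / (x * Real.sin x) := by
      rw [div_sub_div _ _ hspos.ne' h0.ne', one_mul, mul_one, mul_comm]
    rw [heq]
    have h1 : (x - Real.sin x) / (x * Real.sin x) ≤ (x ^ 3 / 4) / (x * (3 * x / 4)) := by
      apply div_le_div₀ (by positivity) (by nlinarith) (by positivity)
      nlinarith
    have h2 : (x ^ 3 / 4) / (x * (3 * x / 4)) = x / 3 := by
      field_simp
    nlinarith [h1, h2.symm ▸ h1]

theorem csc_integral : ∫ x in (0:ℝ)..(π / 2), (1 / Real.sin x - 1 / x) = Real.log (4 / π) := by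
  have hpi : (0:ℝ) < π := pi_pos
  have hab : (0:ℝ) ≤ π / 2 := by positivity
  -- continuity of the integrand on Icc
  have hcont : ContinuousOn (fun x => 1 / Real.sin x - 1 / x) (Icc 0 (π/2)) := by
    intro x hx
    rcases eq_or_lt_of_le hx.1 with h0 | h0
    · -- at 0, squeeze
      subst h0
      have hf0 : 1 / Real.sin 0 - 1 / (0:ℝ) = 0 := by simp
      rw [ContinuousWithinAt, hf0]
      apply squeeze_zero'
      · filter_upwards [self_mem_nhdsWithin,
          eventually_nhdsWithin_of_eventually_nhds (eventually_lt_nhds one_pos : ∀ᶠ x in 𝓝 (0:ℝ), x < 1)]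
          with y hy hy1
        exact (csc_bounds ⟨hy.1, hy1.le⟩).1
      · filter_upwards [self_mem_nhdsWithin,
          eventually_nhdsWithin_of_eventually_nhds (eventually_lt_nhds one_pos : ∀ᶠ x in 𝓝 (0:ℝ), x < 1)]
          with y hy hy1
        exact (csc_bounds ⟨hy.1, hy1.le⟩).2
      · exact tendsto_id.mono_left nhdsWithin_le_nhds
    · -- continuity at interior/right points
      have hxpi : x < π := lt_of_le_of_lt hx.2 (by linarith)
      have hs : Real.sin x ≠ 0 := (Real.sin_pos_of_pos_of_lt_pi h0 hxpi).ne'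
      exact ((continuousAt_const.div Real.continuous_sin.continuousAt hs).sub
        (continuousAt_const.div continuousAt_id h0.ne')).continuousWithinAt
  have hint : IntervalIntegrable (fun x => 1 / Real.sin x - 1 / x) MeasureTheory.volume 0 (π/2) :=
    (uIcc_of_le hab ▸ hcont).intervalIntegrable
  -- limit of sin t / t
  have T1 : Tendsto (fun t : ℝ => Real.sin t / t) (𝓝[≠] (0:ℝ)) (𝓝 1) := by
    have h := Real.hasDerivAt_sin 0
    rw [hasDerivAt_iff_tendsto_slope] at h
    simpa [slope_fun_def, Real.cos_zero, div_eq_inv_mul] using h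
  -- continuity of the antiderivative
  have hFcont : ContinuousOn Fcsc (Icc 0 (π/2)) := by
    intro x hx
    rcases eq_or_lt_of_le hx.1 with h0 | h0
    · subst h0
      rw [ContinuousWithinAt, ← Set.Ioc_insert_left hab, nhdsWithin_insert, tendsto_sup]
      refine ⟨tendsto_pure_nhds _ _, ?_⟩
      have hmap : Tendsto (fun x : ℝ => x/2) (𝓝[Set.Ioc 0 (π/2)] 0) (𝓝[≠] 0) := by
        rw [tendsto_nhdsWithin_iff]
        constructor
        · have hc : Continuous fun x : ℝ => x / 2 := by continuity
          simpa using (hc.tendsto 0).mono_left nhdsWithin_le_nhds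
        · filter_upwards [self_mem_nhdsWithin] with y hy
          simpa using (half_pos hy.1).ne'
      have T2 : Tendsto (fun x : ℝ => Real.sin (x/2) / (x/2)) (𝓝[Set.Ioc 0 (π/2)] 0) (𝓝 1) :=
        T1.comp hmap
      have T3 : Tendsto (fun x : ℝ => Real.log (Real.sin (x/2) / (x/2)))
          (𝓝[Set.Ioc 0 (π/2)] 0) (𝓝 0) := by
        have := (Real.continuousAt_log one_ne_zero).tendsto.comp T2
        simpa [Function.comp_def] using this
      have T3' : Tendsto (fun x : ℝ => Real.log (Real.sin (x/2)) - Real.log (x/2))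
          (𝓝[Set.Ioc 0 (π/2)] 0) (𝓝 0) := by
        apply T3.congr'
        filter_upwards [self_mem_nhdsWithin] with y hy
        have hy2 : 0 < y / 2 := by have := hy.1; positivity
        have hy2' : y / 2 < π := by have := hy.2; linarith
        rw [Real.log_div (Real.sin_pos_of_pos_of_lt_pi hy2 hy2').ne' hy2.ne']
      have T4 : Tendsto (fun x : ℝ => Real.log (Real.cos (x/2))) (𝓝[Set.Ioc 0 (π/2)] 0) (𝓝 0) := by
        have : ContinuousAt (fun x : ℝ => Real.log (Real.cos (x/2))) 0 := by
          apply ContinuousAt.log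
          · exact (Real.continuous_cos.comp (continuous_id.div_const 2)).continuousAt
          · simp
        simpa using this.tendsto.mono_left nhdsWithin_le_nhds
      have : Tendsto Fcsc (𝓝[Set.Ioc 0 (π/2)] 0) (𝓝 (0 - 0 - Real.log 2)) :=
        (T3'.sub T4).sub tendsto_const_nhds
      simpa [Fcsc] using this
    · have hx2 : 0 < x / 2 := by positivity
      have hx2' : x / 2 < π := by have := hx.2; linarith
      have hs : Real.sin (x/2) ≠ 0 := (Real.sin_pos_of_pos_of_lt_pi hx2 hx2').ne'
      have hc : Real.cos (x/2) ≠ 0 := by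
        have := hx.2
        exact (Real.cos_pos_of_mem_Ioo ⟨by linarith, by linarith⟩).ne'
      have c1 : ContinuousAt (fun x : ℝ => Real.log (Real.sin (x/2))) x :=
        ContinuousAt.log (Real.continuous_sin.comp (continuous_id.div_const 2)).continuousAt hs
      have c2 : ContinuousAt (fun x : ℝ => Real.log (x/2)) x :=
        ContinuousAt.log ((continuous_id.div_const 2)).continuousAt hx2.ne'
      have c3 : ContinuousAt (fun x : ℝ => Real.log (Real.cos (x/2))) x :=
        ContinuousAt.log (Real.continuous_cos.comp (continuous_id.div_const 2)).continuousAt hc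
      exact (((c1.sub c2).sub c3).sub continuousAt_const).continuousWithinAt
  -- derivative
  have hderiv : ∀ x ∈ Ioo (0:ℝ) (π/2),
      HasDerivWithinAt Fcsc (1 / Real.sin x - 1 / x) (Ioi x) x := by
    intro x hx
    have hx2 : 0 < x / 2 := by have := hx.1; positivity
    have hx2' : x / 2 < π := by have := hx.2; linarith
    have hspos : 0 < Real.sin (x/2) := Real.sin_pos_of_pos_of_lt_pi hx2 hx2'
    have hcpos : 0 < Real.cos (x/2) := by
      have := hx.2
      exact Real.cos_pos_of_mem_Ioo ⟨by linarith, by linarith⟩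
    have h1 : HasDerivAt (fun x : ℝ => x / 2) (1/2) x := by
      simpa using (hasDerivAt_id x).div_const 2
    have hls : HasDerivAt (fun x : ℝ => Real.log (Real.sin (x/2)))
        (Real.cos (x/2) * (1/2) / Real.sin (x/2)) x :=
      by have := (Real.hasDerivAt_sin (x/2)).comp x h1; exact this.log hspos.ne'
    have hlx : HasDerivAt (fun x : ℝ => Real.log (x/2)) ((1/2) / (x/2)) x :=
      h1.log hx2.ne'
    have hlc : HasDerivAt (fun x : ℝ => Real.log (Real.cos (x/2)))
        (-Real.sin (x/2) * (1/2) / Real.cos (x/2)) x :=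
      by have := (Real.hasDerivAt_cos (x/2)).comp x h1; exact this.log hcpos.ne'
    have hsum : HasDerivAt Fcsc
        (Real.cos (x/2) * (1/2) / Real.sin (x/2) - (1/2) / (x/2)
          - (-Real.sin (x/2) * (1/2) / Real.cos (x/2)) - 0) x :=
      ((hls.sub hlx).sub hlc).sub (hasDerivAt_const x (Real.log 2))
    have hsx : Real.sin x = 2 * Real.sin (x/2) * Real.cos (x/2) := by
      rw [← Real.sin_two_mul]; congr 1; ring
    have heq : Real.cos (x/2) * (1/2) / Real.sin (x/2) - (1/2) / (x/2)
          - (-Real.sin (x/2) * (1/2) / Real.cos (x/2)) - 0 = 1 / Real.sin x - 1 / x := by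
      rw [hsx]
      have hpyth := Real.sin_sq_add_cos_sq (x/2)
      have hx0 : (0:ℝ) < x := hx.1
      set s := Real.sin (x/2) with hsdef
      set c := Real.cos (x/2) with hcdef
      field_simp
      linear_combination x * hpyth
    exact (heq ▸ hsum).hasDerivWithinAt
  rw [integral_eq_sub_of_hasDeriv_right_of_le hab hFcont hderiv hint]
  have h24 : π / 2 / 2 = π / 4 := by ring
  have hF2 : Fcsc (π/2) = -Real.log (π/4) - Real.log 2 := by
    simp only [Fcsc, h24, Real.sin_pi_div_four, Real.cos_pi_div_four]
    ring
  have hF0 : Fcsc 0 = -Real.log 2 := by simp [Fcsc]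
  rw [hF2, hF0, Real.log_div (by norm_num) pi_ne_zero,
    Real.log_div pi_ne_zero (by norm_num)]
  ring
end

section
/- The integral ∫_0^1 log(x) · log(1−x) dx equals 2 − π²/6. -/
open Real

open MeasureTheory Filter Set Topology

lemma aux_bound (n : ℕ) {x : ℝ} (hx : x ∈ Set.Ioc (0:ℝ) 1) :
    |x ^ (n+1) * Real.log x| ≤ 1 := by
  have h1 : |Real.log x * x| < 1 := Real.abs_log_mul_self_lt x hx.1 hx.2
  have h2 : x ^ (n+1) ≤ x := by
    calc x ^ (n+1) ≤ x ^ 1 := pow_le_pow_of_le_one hx.1.le hx.2 (by omega)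
    _ = x := pow_one x
  calc |x ^ (n+1) * Real.log x| = x ^ (n+1) * |Real.log x| := by
        rw [abs_mul, abs_of_nonneg (pow_nonneg hx.1.le _)]
    _ ≤ x * |Real.log x| := mul_le_mul_of_nonneg_right h2 (abs_nonneg _)
    _ = |Real.log x * x| := by rw [abs_mul, abs_of_nonneg hx.1.le]; ring
    _ ≤ 1 := h1.le

lemma aux_integrable (n : ℕ) :
    IntegrableOn (fun x => x ^ (n+1) * Real.log x) (Set.Ioc (0:ℝ) 1) := by
  constructor
  · exact ((measurable_id.pow_const _).mul Real.measurable_log).aestronglyMeasurable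
  · apply MeasureTheory.HasFiniteIntegral.of_bounded (C := 1)
    rw [ae_restrict_iff' measurableSet_Ioc]
    exact .of_forall fun x hx => aux_bound n hx

lemma aux_intable (n : ℕ) :
    IntervalIntegrable (fun x => x ^ (n+1) * Real.log x) volume 0 1 := by
  rw [intervalIntegrable_iff_integrableOn_Ioc_of_le zero_le_one]
  exact aux_integrable n

lemma aux_int (n : ℕ) :
    ∫ x in (0:ℝ)..1, x ^ (n+1) * Real.log x = -(1 / ((n:ℝ)+2)^2) := by
  have h2 : ((n:ℝ)+2) ≠ 0 := by positivity
  set F : ℝ → ℝ := fun x => x ^ (n+2) * Real.log x / ((n:ℝ)+2) - x ^ (n+2) / ((n:ℝ)+2)^2 with hF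
  have hderiv : ∀ x ∈ Set.Ioo (0:ℝ) 1, HasDerivAt F (x ^ (n+1) * Real.log x) x := by
    intro x hx
    have h := (((hasDerivAt_pow (n+2) x).mul (Real.hasDerivAt_log hx.1.ne')).div_const
        ((n:ℝ)+2)).sub ((hasDerivAt_pow (n+2) x).div_const (((n:ℝ)+2)^2))
    convert! h using 1
    have hx0 : x ≠ 0 := hx.1.ne'
    rw [show n + 2 - 1 = n + 1 by omega]; push_cast
    field_simp
    ring
  have ha : Tendsto F (𝓝[>] (0:ℝ)) (𝓝 0) := by
    have h1 : Tendsto (fun x : ℝ => Real.log x * x ^ ((n:ℝ)+2)) (𝓝[>] (0:ℝ)) (𝓝 0) :=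
      tendsto_log_mul_rpow_nhdsGT_zero (by positivity)
    have h1' : Tendsto (fun x : ℝ => x ^ (n+2) * Real.log x) (𝓝[>] (0:ℝ)) (𝓝 0) := by
      refine h1.congr' ?_
      filter_upwards [self_mem_nhdsWithin] with x (hx : (0:ℝ) < x)
      rw [show ((n:ℝ)+2) = ((n+2 : ℕ) : ℝ) by push_cast; ring, Real.rpow_natCast, mul_comm]
    have h2' : Tendsto (fun x : ℝ => x ^ (n+2) / ((n:ℝ)+2)^2) (𝓝[>] (0:ℝ)) (𝓝 0) := by
      have : Tendsto (fun x : ℝ => x ^ (n+2)) (𝓝[>] (0:ℝ)) (𝓝 (0 ^ (n+2))) :=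
        ((continuous_pow (n+2)).tendsto 0).mono_left nhdsWithin_le_nhds
      simpa using this.div_const (((n:ℝ)+2)^2)
    have := (h1'.div_const ((n:ℝ)+2)).sub h2'
    simpa using this
  have hb : Tendsto F (𝓝[<] (1:ℝ)) (𝓝 (-(1 / ((n:ℝ)+2)^2))) := by
    have hc : ContinuousAt F 1 := by
      apply ContinuousAt.sub
      · exact (((continuous_pow (n+2)).continuousAt).mul
          (Real.continuousAt_log one_ne_zero)).div_const _
      · exact ((continuous_pow (n+2)).continuousAt).div_const _
    have : F 1 = -(1 / ((n:ℝ)+2)^2) := by simp [hF]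
    exact this ▸ hc.continuousWithinAt.tendsto
  have := intervalIntegral.integral_eq_sub_of_hasDerivAt_of_tendsto zero_lt_one hderiv
    (aux_intable n) ha hb
  simpa using this

lemma hs2 : HasSum (fun n : ℕ => (1:ℝ)/((n:ℝ)+2)^2) (π^2/6 - 1) := by
  have h2 : HasSum (fun n : ℕ => (1:ℝ)/((n+2:ℕ):ℝ)^2) (π^2/6 - 1) := by
    refine (hasSum_nat_add_iff (f := fun n : ℕ => (1:ℝ)/(n:ℝ)^2) 2).2 ?_
    have h := hasSum_zeta_two
    convert! h using 1
    rw [Finset.sum_range_succ, Finset.sum_range_one]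
    norm_num
  refine h2.congr_fun fun n => by push_cast; ring_nf

lemma hs1 : HasSum (fun n : ℕ => (1:ℝ)/((n:ℝ)+1) - 1/((n:ℝ)+2)) 1 := by
  rw [hasSum_iff_tendsto_nat_of_nonneg]
  · have heq : ∀ n : ℕ, ∑ i ∈ Finset.range n, ((1:ℝ)/((i:ℝ)+1) - 1/((i:ℝ)+2)) =
        1 - 1/((n:ℝ)+1) := by
      intro n
      have h := Finset.sum_range_sub' (f := fun i : ℕ => (1:ℝ)/((i:ℝ)+1)) n
      push_cast at h
      calc ∑ i ∈ Finset.range n, ((1:ℝ)/((i:ℝ)+1) - 1/((i:ℝ)+2))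
          = ∑ i ∈ Finset.range n, ((1:ℝ)/((i:ℝ)+1) - 1/(((i:ℝ)+1)+1)) := by
            refine Finset.sum_congr rfl fun i _ => by ring_nf
        _ = 1/((0:ℝ)+1) - 1/((n:ℝ)+1) := h
        _ = 1 - 1/((n:ℝ)+1) := by norm_num
    simp only [heq]
    have h0 := tendsto_one_div_add_atTop_nhds_zero_nat (𝕜 := ℝ)
    simpa using ((tendsto_const_nhds (x := (1:ℝ))).sub h0)
  · intro i
    have h2 : (0:ℝ) < (i:ℝ)+2 := by positivity
    rw [sub_nonneg]
    gcongr <;> linarith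

lemma hsum : HasSum (fun n : ℕ => 1/(((n:ℝ)+1)*((n:ℝ)+2)^2)) (2 - π^2/6) := by
  have h := hs1.sub hs2
  have he : (1 : ℝ) - (π^2/6 - 1) = 2 - π^2/6 := by ring
  rw [he] at h
  refine h.congr_fun fun n => ?_
  have h1 : ((n:ℝ)+1) ≠ 0 := by positivity
  have h2 : ((n:ℝ)+2) ≠ 0 := by positivity
  field_simp
  ring


noncomputable def g (n : ℕ) (x : ℝ) : ℝ := -(1/((n:ℝ)+1)) * (x ^ (n+1) * Real.log x)

lemma g_integrable (n : ℕ) : IntegrableOn (g n) (Set.Ioc (0:ℝ) 1) :=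
  (aux_integrable n).const_mul _

lemma g_nonneg (n : ℕ) {x : ℝ} (hx : x ∈ Set.Ioc (0:ℝ) 1) : 0 ≤ g n x := by
  unfold g
  have h1 : Real.log x ≤ 0 := Real.log_nonpos hx.1.le hx.2
  have h2 : (0:ℝ) ≤ x ^ (n+1) := pow_nonneg hx.1.le _
  have h3 : (0:ℝ) < (n:ℝ)+1 := by positivity
  have h4 : (0:ℝ) ≤ x ^ (n+1) * (-Real.log x) := mul_nonneg h2 (neg_nonneg.2 h1)
  have h5 : (0:ℝ) ≤ 1/((n:ℝ)+1) := by positivity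
  calc (0:ℝ) ≤ (1/((n:ℝ)+1)) * (x ^ (n+1) * (-Real.log x)) := mul_nonneg h5 h4
    _ = -(1/((n:ℝ)+1)) * (x ^ (n+1) * Real.log x) := by ring

lemma g_int_val (n : ℕ) :
    ∫ x in Set.Ioc (0:ℝ) 1, g n x = 1/(((n:ℝ)+1)*((n:ℝ)+2)^2) := by
  unfold g
  rw [MeasureTheory.integral_const_mul]
  rw [← intervalIntegral.integral_of_le zero_le_one, aux_int n]
  have h1 : ((n:ℝ)+1) ≠ 0 := by positivity
  have h2 : ((n:ℝ)+2) ≠ 0 := by positivity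
  field_simp

lemma g_lintegral (n : ℕ) :
    ∫⁻ x in Set.Ioc (0:ℝ) 1, ‖g n x‖₊ = ENNReal.ofReal (1/(((n:ℝ)+1)*((n:ℝ)+2)^2)) := by
  simp_rw [← enorm_eq_nnnorm]
  rw [← MeasureTheory.ofReal_integral_norm_eq_lintegral_enorm (g_integrable n)]
  congr 1
  rw [← g_int_val n]
  refine setIntegral_congr_fun measurableSet_Ioc fun x hx => ?_
  rw [Real.norm_eq_abs, abs_of_nonneg (g_nonneg n hx)]

lemma g_hasSum {x : ℝ} (hx : x ∈ Set.Ioo (0:ℝ) 1) :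
    HasSum (fun n => g n x) (Real.log x * Real.log (1-x)) := by
  have habs : |x| < 1 := by rw [abs_of_pos hx.1]; exact hx.2
  have h := (Real.hasSum_pow_div_log_of_abs_lt_one habs).mul_left (-Real.log x)
  have he : -Real.log x * -Real.log (1-x) = Real.log x * Real.log (1-x) := by ring
  rw [he] at h
  refine h.congr_fun fun n => ?_
  unfold g
  ring


theorem log_mul_log_integral :
    ∫ x in (0:ℝ)..1, Real.log x * Real.log (1 - x) = 2 - π ^ 2 / 6 := by
  have hsummable : Summable (fun n : ℕ => 1/(((n:ℝ)+1)*((n:ℝ)+2)^2)) := hsum.summable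
  have hswap : ∫ x in Set.Ioc (0:ℝ) 1, (∑' n, g n x) = ∑' n, ∫ x in Set.Ioc (0:ℝ) 1, g n x := by
    refine MeasureTheory.integral_tsum (fun n => (g_integrable n).aestronglyMeasurable) ?_
    have h : ∑' n : ℕ, ∫⁻ x in Set.Ioc (0:ℝ) 1, ‖g n x‖₊ =
        ∑' n : ℕ, ENNReal.ofReal (1/(((n:ℝ)+1)*((n:ℝ)+2)^2)) := by
      simp_rw [g_lintegral]
    simp_rw [enorm_eq_nnnorm]
    rw [h, ← ENNReal.ofReal_tsum_of_nonneg (fun n => by positivity) hsummable]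
    exact ENNReal.ofReal_ne_top
  have hleft : ∫ x in Set.Ioc (0:ℝ) 1, Real.log x * Real.log (1-x)
      = ∫ x in Set.Ioc (0:ℝ) 1, (∑' n, g n x) := by
    rw [← setIntegral_congr_set Ioo_ae_eq_Ioc, ← setIntegral_congr_set Ioo_ae_eq_Ioc]
    exact setIntegral_congr_fun measurableSet_Ioo fun x hx => ((g_hasSum hx).tsum_eq).symm
  rw [intervalIntegral.integral_of_le zero_le_one, hleft, hswap]
  simp_rw [g_int_val]
  exact hsum.tsum_eq
end

section
/- As n → ∞, G(n) := (1/n) ∑_{ℓ=1}^{n−1} 1/sin(πℓ/n) satisfies G(n) = (2/π)(log(n) + γ + log(2/π)) + o(1), where γ is the Euler–Mascheroni constant. -/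
open Real Filter MeasureTheory Topology Set intervalIntegral

noncomputable def Fc (x : ℝ) : ℝ := 1 / Real.sin x - 1 / x - 1 / (π - x)

lemma tendsto_csc_sub_inv : Tendsto (fun x : ℝ => 1 / Real.sin x - 1 / x) (𝓝[>] (0:ℝ)) (𝓝 0) := by
  have hmem : Set.Ioo (0:ℝ) 1 ∈ 𝓝[>] (0:ℝ) := Ioo_mem_nhdsGT_of_mem ⟨le_refl _, zero_lt_one⟩
  refine tendsto_of_tendsto_of_tendsto_of_le_of_le' (g := fun _ => (0:ℝ))
    (h := fun x : ℝ => x / 3) tendsto_const_nhds ?_ ?_ ?_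
  · refine Tendsto.mono_left ?_ nhdsWithin_le_nhds
    have := (continuous_id.div_const (3:ℝ)).tendsto (0:ℝ)
    simpa using this
  · filter_upwards [hmem] with x hx
    have hxpi : x < π := lt_of_lt_of_le hx.2 (by linarith [Real.pi_gt_three])
    have hs : 0 < Real.sin x := Real.sin_pos_of_pos_of_lt_pi hx.1 hxpi
    have hsx : Real.sin x < x := Real.sin_lt hx.1
    have := one_div_le_one_div_of_le hs hsx.le
    linarith
  · filter_upwards [hmem] with x hx
    have hxpi : x < π := lt_of_lt_of_le hx.2 (by linarith [Real.pi_gt_three])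
    have hs : 0 < Real.sin x := Real.sin_pos_of_pos_of_lt_pi hx.1 hxpi
    have hsx : Real.sin x < x := Real.sin_lt hx.1
    have hcube : x - x ^ 3 / 4 < Real.sin x := by
      have := Real.sin_gt_sub_cube hx.1
      have : 0 < x ^ 3 := pow_pos hx.1 3
      linarith
    have hx3 : x ^ 3 ≤ x := by nlinarith [mul_nonneg (mul_nonneg hx.1.le (sub_nonneg.2 hx.2.le)) (by linarith : (0:ℝ) ≤ 1 + x)]
    have hlb : 3 * x / 4 ≤ Real.sin x := by nlinarith
    have key : 1 / Real.sin x - 1 / x = (x - Real.sin x) / (x * Real.sin x) := by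
      rw [div_sub_div _ _ (ne_of_gt hs) (ne_of_gt hx.1)]; rw [mul_comm (Real.sin x) x]; ring_nf
    rw [key]
    have h2 : (x - Real.sin x) / (x * Real.sin x) ≤ (x ^ 3 / 4) / (3 * x ^ 2 / 4) := by
      apply div_le_div₀ (by nlinarith) (by nlinarith) (by nlinarith) (by nlinarith)
    calc (x - Real.sin x) / (x * Real.sin x) ≤ (x ^ 3 / 4) / (3 * x ^ 2 / 4) := h2
    _ = x / 3 := by
        have hxne : x ≠ 0 := ne_of_gt hx.1
        field_simp

lemma Fc_symm (x : ℝ) : Fc (π - x) = Fc x := by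
  simp only [Fc, Real.sin_pi_sub, sub_sub_cancel]
  ring

lemma Fc_contOn : ContinuousOn Fc (Set.Icc 0 π) := by
  have h0 : ContinuousWithinAt Fc (Set.Icc 0 π) 0 := by
    rw [← continuousWithinAt_diff_self]
    have hsub : Set.Icc (0:ℝ) π \ {0} ⊆ Set.Ioi 0 := by
      rintro x ⟨hx, hx0⟩
      exact lt_of_le_of_ne hx.1 (Ne.symm (by simpa using hx0))
    unfold ContinuousWithinAt
    apply Tendsto.mono_left _ (nhdsWithin_mono _ hsub)
    have hF0 : Fc 0 = 0 - 1 / π := by simp [Fc]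
    rw [hF0]
    have h2 : Tendsto (fun x : ℝ => 1 / (π - x)) (𝓝[>] (0:ℝ)) (𝓝 (1 / π)) := by
      apply Tendsto.mono_left _ nhdsWithin_le_nhds
      have : ContinuousAt (fun x : ℝ => 1 / (π - x)) 0 := by
        apply ContinuousAt.div continuousAt_const (by fun_prop)
        simp [Real.pi_ne_zero]
      simpa using this.tendsto
    exact (tendsto_csc_sub_inv.sub h2).congr (fun x => by simp only [Fc])
  have hpi : ContinuousWithinAt Fc (Set.Icc 0 π) π := by
    have hg : ContinuousWithinAt (fun x : ℝ => π - x) (Set.Icc 0 π) π :=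
      (continuous_const.sub continuous_id).continuousWithinAt
    have hmaps : Set.MapsTo (fun x : ℝ => π - x) (Set.Icc 0 π) (Set.Icc 0 π) := by
      intro x hx
      exact ⟨by simp only [Set.mem_Icc] at hx ⊢; linarith [hx.2], by simp; linarith [hx.1]⟩
    have hcomp : ContinuousWithinAt (Fc ∘ fun x : ℝ => π - x) (Set.Icc 0 π) π :=
      ContinuousWithinAt.comp (by simpa using h0) hg hmaps
    exact hcomp.congr (fun x _ => (Fc_symm x).symm) (Fc_symm π).symm
  intro x hx
  rcases eq_or_lt_of_le hx.1 with h1 | h1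
  · exact h1 ▸ h0
  rcases eq_or_lt_of_le hx.2 with h2 | h2
  · exact h2 ▸ hpi
  have hs : Real.sin x ≠ 0 := ne_of_gt (Real.sin_pos_of_pos_of_lt_pi h1 h2)
  apply ContinuousAt.continuousWithinAt
  apply ContinuousAt.sub
  apply ContinuousAt.sub
  · exact ContinuousAt.div continuousAt_const (Real.continuous_sin.continuousAt) hs
  · exact ContinuousAt.div continuousAt_const continuousAt_id (ne_of_gt h1)
  · exact ContinuousAt.div continuousAt_const (by fun_prop) (by simp; intro h; linarith)

lemma hasDerivAt_log_tan_half {x : ℝ} (hx : x ∈ Set.Ioo 0 π) :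
    HasDerivAt (fun y : ℝ => Real.log (Real.tan (y / 2))) (1 / Real.sin x) x := by
  have h2 : x / 2 ∈ Set.Ioo 0 (π / 2) := ⟨by linarith [hx.1], by linarith [hx.2]⟩
  have hcos : 0 < Real.cos (x / 2) :=
    Real.cos_pos_of_mem_Ioo ⟨by linarith [h2.1, pi_pos], h2.2⟩
  have hsin : 0 < Real.sin (x / 2) :=
    Real.sin_pos_of_pos_of_lt_pi h2.1 (by linarith [pi_pos, h2.2])
  have htan : 0 < Real.tan (x / 2) := Real.tan_pos_of_pos_of_lt_pi_div_two h2.1 h2.2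
  have hd1 : HasDerivAt (fun y : ℝ => y / 2) (1 / 2) x := by
    simpa using (hasDerivAt_id x).div_const 2
  have hd2 : HasDerivAt Real.tan (1 / Real.cos (x / 2) ^ 2) (x / 2) :=
    Real.hasDerivAt_tan (ne_of_gt hcos)
  have hd3 := (Real.hasDerivAt_log (ne_of_gt htan)).comp x (hd2.comp x hd1)
  refine hd3.congr_deriv ?_
  have hsx : Real.sin x = 2 * Real.sin (x / 2) * Real.cos (x / 2) := by
    rw [← Real.sin_two_mul]; ring_nf
  rw [Real.tan_eq_sin_div_cos, hsx]
  field_simp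

lemma integral_Fc_sub {t : ℝ} (ht : t ∈ Set.Ioo 0 (π / 2)) :
    ∫ x in t..(π - t), Fc x =
      Real.log (Real.tan ((π - t) / 2)) - Real.log (Real.tan (t / 2))
        - 2 * (Real.log (π - t) - Real.log t) := by
  have hpi := pi_pos
  have htle : t ≤ π - t := by linarith [ht.2]
  have hIcc : Set.uIcc t (π - t) = Set.Icc t (π - t) := Set.uIcc_of_le htle
  have hsub : Set.Icc t (π - t) ⊆ Set.Ioo 0 π := by
    intro x hx
    exact ⟨lt_of_lt_of_le ht.1 hx.1, lt_of_le_of_lt hx.2 (by linarith [ht.1])⟩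
  -- integrability of the three pieces
  have hsin_ne : ∀ x ∈ Set.Icc t (π - t), Real.sin x ≠ 0 := by
    intro x hx
    exact ne_of_gt (Real.sin_pos_of_pos_of_lt_pi (hsub hx).1 (hsub hx).2)
  have hint1 : IntervalIntegrable (fun x => 1 / Real.sin x) volume t (π - t) := by
    apply ContinuousOn.intervalIntegrable
    rw [hIcc]
    exact continuousOn_const.div Real.continuous_sin.continuousOn hsin_ne
  have hint2 : IntervalIntegrable (fun x : ℝ => 1 / x) volume t (π - t) := by
    apply ContinuousOn.intervalIntegrable
    rw [hIcc]
    exact continuousOn_const.div continuousOn_id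
      (fun x hx => ne_of_gt (lt_of_lt_of_le ht.1 hx.1))
  have hint3 : IntervalIntegrable (fun x : ℝ => 1 / (π - x)) volume t (π - t) := by
    apply ContinuousOn.intervalIntegrable
    rw [hIcc]
    exact continuousOn_const.div (continuousOn_const.sub continuousOn_id)
      (fun x hx => sub_ne_zero.mpr (by have h2 := hx.2; intro h; rw [← h] at h2; linarith [ht.1]))
  -- split
  have hsplit : ∫ x in t..(π - t), Fc x =
      ((∫ x in t..(π - t), 1 / Real.sin x) - ∫ x in t..(π - t), (1:ℝ) / x)
        - ∫ x in t..(π - t), 1 / (π - x) := by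
    rw [← intervalIntegral.integral_sub hint1 hint2,
      ← intervalIntegral.integral_sub (hint1.sub hint2) hint3]
    rfl
  -- csc integral
  have heq1 : ∫ x in t..(π - t), 1 / Real.sin x =
      Real.log (Real.tan ((π - t) / 2)) - Real.log (Real.tan (t / 2)) := by
    have key := intervalIntegral.integral_eq_sub_of_hasDerivAt
      (f := fun y => Real.log (Real.tan (y / 2))) (f' := fun x => 1 / Real.sin x)
      (a := t) (b := π - t) ?_ hint1
    · exact key
    · intro x hx
      rw [hIcc] at hx
      exact hasDerivAt_log_tan_half (hsub hx)
  -- 1/x integral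
  have heq2 : ∫ x in t..(π - t), (1:ℝ) / x = Real.log (π - t) - Real.log t := by
    rw [integral_one_div (by rw [hIcc]; intro h; exact absurd h.1 (by push_neg; exact ht.1))]
    rw [Real.log_div (by linarith [ht.1, ht.2]) (ne_of_gt ht.1)]
  -- 1/(π-x) integral
  have heq3 : ∫ x in t..(π - t), (1:ℝ) / (π - x) = Real.log (π - t) - Real.log t := by
    have : ∫ x in t..(π - t), (1:ℝ) / (π - x) =
        (fun y => -Real.log (π - y)) (π - t) - (fun y => -Real.log (π - y)) t := by
      apply intervalIntegral.integral_eq_sub_of_hasDerivAt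
        (f := fun y => -Real.log (π - y)) (f' := fun x => 1 / (π - x))
      · intro x hx
        rw [hIcc] at hx
        have hne : π - x ≠ 0 := by
          have := (hsub hx).2; intro h; linarith [sub_eq_zero.mp h]
        have hd : HasDerivAt (fun y : ℝ => π - y) (-1) x := by
          simpa using (hasDerivAt_id x).const_sub π
        have := ((Real.hasDerivAt_log hne).comp x hd).neg
        refine this.congr_deriv ?_
        ring
      · exact hint3
    rw [this]
    simp only [sub_sub_cancel]
    ring
  rw [hsplit, heq1, heq2, heq3]
  ring

lemma tendsto_tan_slope : Tendsto (fun u : ℝ => Real.tan u / u) (𝓝[≠] (0:ℝ)) (𝓝 1) := by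
  have h := Real.hasDerivAt_tan (by simp : Real.cos 0 ≠ 0)
  rw [hasDerivAt_iff_tendsto_slope] at h
  have heq : (fun u : ℝ => Real.tan u / u) = slope Real.tan 0 := by
    funext x
    simp [slope_def_field, Real.tan_zero]
  rw [heq]
  simpa using h

lemma tendsto_div_tan_half : Tendsto (fun t : ℝ => t / Real.tan (t / 2)) (𝓝[>] (0:ℝ)) (𝓝 2) := by
  have hmap : Tendsto (fun t : ℝ => t / 2) (𝓝[>] (0:ℝ)) (𝓝[≠] (0:ℝ)) := by
    rw [tendsto_nhdsWithin_iff]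
    constructor
    · have := (continuous_id.div_const (2:ℝ)).tendsto (0:ℝ)
      simp only [id_eq, zero_div] at this
      exact this.mono_left nhdsWithin_le_nhds
    · filter_upwards [self_mem_nhdsWithin] with t ht
      have : (0:ℝ) < t := ht
      simp only [Set.mem_compl_iff, Set.mem_singleton_iff]
      positivity
  have h1 : Tendsto (fun t : ℝ => Real.tan (t / 2) / (t / 2)) (𝓝[>] (0:ℝ)) (𝓝 1) :=
    tendsto_tan_slope.comp hmap
  have h2 := (h1.inv₀ one_ne_zero).const_mul (2:ℝ)
  simp only [inv_one, mul_one] at h2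
  refine Tendsto.congr' ?_ h2
  filter_upwards [Ioo_mem_nhdsGT_of_mem (Set.left_mem_Ico.mpr pi_pos)] with t ht
  have h2' : t / 2 ∈ Set.Ioo 0 (π / 2) := ⟨by linarith [ht.1], by linarith [ht.2]⟩
  have htan : Real.tan (t / 2) ≠ 0 :=
    ne_of_gt (Real.tan_pos_of_pos_of_lt_pi_div_two h2'.1 h2'.2)
  have ht0 : t ≠ 0 := ne_of_gt ht.1
  field_simp

lemma integral_Fc : ∫ x in (0:ℝ)..π, Fc x = 2 * Real.log (2 / π) := by
  have hpi := pi_pos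
  have hFI : IntervalIntegrable Fc volume 0 π := by
    apply ContinuousOn.intervalIntegrable
    rw [Set.uIcc_of_le hpi.le]
    exact Fc_contOn
  have hIntOn : IntegrableOn Fc (Set.uIcc 0 π) volume := by
    rw [Set.uIcc_of_le hpi.le]
    exact Fc_contOn.integrableOn_compact isCompact_Icc
  set P : ℝ → ℝ := fun u => ∫ x in (0:ℝ)..u, Fc x with hPdef
  have hP : ContinuousOn P (Set.Icc 0 π) := by
    have := intervalIntegral.continuousOn_primitive_interval hIntOn
    rwa [Set.uIcc_of_le hpi.le] at this
  -- limit 1 : P (π - t) - P t → P π - P 0 along 𝓝[>] 0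
  have hmem : Set.Ioo (0:ℝ) π ∈ 𝓝[>] (0:ℝ) :=
    Ioo_mem_nhdsGT_of_mem (Set.left_mem_Ico.mpr hpi)
  have hcomp1 : Tendsto (fun t : ℝ => π - t) (𝓝[>] (0:ℝ)) (𝓝[Set.Icc 0 π] π) := by
    rw [tendsto_nhdsWithin_iff]
    constructor
    · have h : Tendsto (fun t : ℝ => π - t) (𝓝 0) (𝓝 (π - 0)) :=
        (continuous_const.sub continuous_id).tendsto 0
      rw [sub_zero] at h
      exact h.mono_left nhdsWithin_le_nhds
    · filter_upwards [hmem] with t ht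
      exact ⟨by linarith [ht.2], by linarith [ht.1]⟩
  have hcomp0 : Tendsto (fun t : ℝ => t) (𝓝[>] (0:ℝ)) (𝓝[Set.Icc 0 π] 0) := by
    rw [tendsto_nhdsWithin_iff]
    refine ⟨tendsto_id.mono_right nhdsWithin_le_nhds, ?_⟩
    filter_upwards [hmem] with t ht
    exact ⟨ht.1.le, ht.2.le⟩
  have hlim1 : Tendsto (fun t : ℝ => P (π - t) - P t) (𝓝[>] (0:ℝ)) (𝓝 (P π - P 0)) :=
    ((hP π (Set.right_mem_Icc.mpr hpi.le)).tendsto.comp hcomp1).sub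
      ((hP 0 (Set.left_mem_Icc.mpr hpi.le)).tendsto.comp hcomp0)
  -- limit 2 : same function tends to 2 log (2/π)
  have hlog1 : Tendsto (fun t : ℝ => Real.log (t / Real.tan (t / 2))) (𝓝[>] (0:ℝ))
      (𝓝 (Real.log 2)) :=
    ((Real.continuousAt_log two_ne_zero).tendsto).comp tendsto_div_tan_half
  have hlog2 : Tendsto (fun t : ℝ => Real.log (π - t)) (𝓝[>] (0:ℝ)) (𝓝 (Real.log π)) := by
    have hc : ContinuousAt (fun t : ℝ => Real.log (π - t)) 0 := by
      apply (Real.continuousAt_log (by simpa using Real.pi_ne_zero)).comp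
      fun_prop
    simpa using hc.tendsto.mono_left nhdsWithin_le_nhds
  have hlim2 : Tendsto (fun t : ℝ => 2 * Real.log (t / Real.tan (t / 2))
      - 2 * Real.log (π - t)) (𝓝[>] (0:ℝ)) (𝓝 (2 * Real.log (2 / π))) := by
    have := (hlog1.const_mul (2:ℝ)).sub (hlog2.const_mul (2:ℝ))
    rw [Real.log_div two_ne_zero (ne_of_gt hpi)]
    convert this using 2
    ring
  -- identify the two functions eventually
  have hev : (fun t : ℝ => P (π - t) - P t) =ᶠ[𝓝[>] (0:ℝ)]
      (fun t : ℝ => 2 * Real.log (t / Real.tan (t / 2)) - 2 * Real.log (π - t)) := by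
    have hmem2 : Set.Ioo (0:ℝ) (π/2) ∈ 𝓝[>] (0:ℝ) :=
      Ioo_mem_nhdsGT_of_mem (Set.left_mem_Ico.mpr (by linarith))
    filter_upwards [hmem2] with t ht
    have h1 : IntervalIntegrable Fc volume 0 (π - t) := by
      apply hFI.mono_set
      rw [Set.uIcc_of_le (by linarith [ht.2, hpi] : (0:ℝ) ≤ π - t), Set.uIcc_of_le hpi.le]
      exact Set.Icc_subset_Icc le_rfl (by linarith [ht.1])
    have h2 : IntervalIntegrable Fc volume 0 t := by
      apply hFI.mono_set
      rw [Set.uIcc_of_le ht.1.le, Set.uIcc_of_le hpi.le]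
      exact Set.Icc_subset_Icc le_rfl (by linarith [ht.2, hpi])
    have hsub := intervalIntegral.integral_interval_sub_left h1 h2
    have : P (π - t) - P t = ∫ x in t..(π - t), Fc x := hsub
    rw [this, integral_Fc_sub ht]
    have htan_pos : 0 < Real.tan (t / 2) :=
      Real.tan_pos_of_pos_of_lt_pi_div_two (by linarith [ht.1]) (by linarith [ht.2])
    have hhalf : (π - t) / 2 = π / 2 - t / 2 := by ring
    rw [hhalf, Real.tan_pi_div_two_sub, Real.log_inv,
      Real.log_div (ne_of_gt ht.1) (ne_of_gt htan_pos)]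
    ring
  have hP0 : P 0 = 0 := intervalIntegral.integral_same
  have := tendsto_nhds_unique (hlim1.congr' hev) hlim2
  rw [hP0, sub_zero] at this
  exact this
lemma riemann_sum_tendsto {f : ℝ → ℝ} (hf : ContinuousOn f (Set.Icc 0 π)) :
    Tendsto (fun n : ℕ => (π / n) * ∑ ℓ ∈ Finset.range n, f (π * ℓ / n)) atTop
      (nhds (∫ x in (0:ℝ)..π, f x)) := by
  rw [Metric.tendsto_atTop]
  intro ε hε
  have hUC := isCompact_Icc.uniformContinuousOn_of_continuous hf
  rw [Metric.uniformContinuousOn_iff] at hUC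
  have hε' : 0 < ε / (2 * (π + 1)) := by positivity
  obtain ⟨δ, hδ, hδ'⟩ := hUC _ hε'
  obtain ⟨N, hN⟩ := exists_nat_gt (π / δ)
  refine ⟨N + 1, fun n hn => ?_⟩
  have hn0 : 0 < n := by omega
  have hnR : (0:ℝ) < n := by exact_mod_cast hn0
  have hNn : π / δ < (n:ℝ) := hN.trans_le (by exact_mod_cast by omega)
  have hstep : π / n < δ := by
    rw [div_lt_iff₀ hnR]; rw [div_lt_iff₀ hδ] at hNn; linarith
  set a : ℕ → ℝ := fun k => π * k / n with ha
  have hmono : ∀ k : ℕ, a k ≤ a (k + 1) := by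
    intro k; simp only [ha]
    push_cast
    have h1 : (k:ℝ) ≤ (k:ℝ)+1 := by linarith
    gcongr
  have hak : ∀ k : ℕ, k ≤ n → a k ∈ Set.Icc 0 π := by
    intro k hk
    refine ⟨by positivity, ?_⟩
    rw [div_le_iff₀ hnR]
    have : (k:ℝ) ≤ n := by exact_mod_cast hk
    nlinarith [pi_pos]
  have hdiff : ∀ k : ℕ, a (k + 1) - a k = π / n := by
    intro k; simp only [ha]; push_cast; field_simp; ring
  have hsub : ∀ k : ℕ, k < n → Set.uIcc (a k) (a (k+1)) ⊆ Set.Icc 0 π := by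
    intro k hk
    rw [Set.uIcc_of_le (hmono k)]
    exact Set.Icc_subset_Icc (hak k (le_of_lt hk)).1 (hak (k+1) hk).2
  have hint : ∀ k < n, IntervalIntegrable f volume (a k) (a (k+1)) :=
    fun k hk => (hf.mono (hsub k hk)).intervalIntegrable
  have hsplit : ∑ k ∈ Finset.range n, ∫ x in (a k)..(a (k+1)), f x = ∫ x in (0:ℝ)..π, f x := by
    rw [intervalIntegral.sum_integral_adjacent_intervals hint]
    congr 1
    · simp [ha]
    · simp only [ha]; field_simp
  have hterm : ∀ k ∈ Finset.range n,
      |π / n * f (a k) - ∫ x in (a k)..(a (k+1)), f x| ≤ (ε / (2 * (π + 1))) * (π / n) := by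
    intro k hk
    rw [Finset.mem_range] at hk
    have hconst : π / n * f (a k) = ∫ _x in (a k)..(a (k+1)), f (a k) := by
      rw [intervalIntegral.integral_const, smul_eq_mul, hdiff k]
    rw [hconst, ← intervalIntegral.integral_sub intervalIntegrable_const (hint k hk)]
    have := intervalIntegral.norm_integral_le_of_norm_le_const
      (C := ε / (2 * (π + 1))) (a := a k) (b := a (k+1)) (f := fun x => f (a k) - f x) ?_
    · rw [Real.norm_eq_abs] at this
      calc |∫ x in (a k)..(a (k+1)), f (a k) - f x| ≤ ε / (2 * (π + 1)) * |a (k+1) - a k| := this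
      _ = (ε / (2 * (π + 1))) * (π / n) := by rw [hdiff k, abs_of_pos (by positivity)]
    · intro x hx
      have hxI : x ∈ Set.Icc 0 π := (hsub k hk) (Set.uIoc_subset_uIcc hx)
      rw [Real.norm_eq_abs, ← Real.dist_eq, dist_comm]
      apply le_of_lt
      apply hδ' x hxI (a k) (hak k hk.le)
      rw [Set.uIoc_of_le (hmono k)] at hx
      rw [Real.dist_eq, abs_of_pos (by linarith [hx.1])]
      calc x - a k ≤ a (k+1) - a k := by linarith [hx.2]
      _ = π / n := hdiff k
      _ < δ := hstep
  rw [Real.dist_eq, ← hsplit, Finset.mul_sum, ← Finset.sum_sub_distrib]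
  calc |∑ k ∈ Finset.range n, (π / n * f (a k) - ∫ x in (a k)..(a (k+1)), f x)|
      ≤ ∑ k ∈ Finset.range n, |π / n * f (a k) - ∫ x in (a k)..(a (k+1)), f x| :=
        Finset.abs_sum_le_sum_abs _ _
    _ ≤ ∑ _k ∈ Finset.range n, (ε / (2 * (π + 1))) * (π / n) := Finset.sum_le_sum hterm
    _ = n * ((ε / (2 * (π + 1))) * (π / n)) := by rw [Finset.sum_const, Finset.card_range, nsmul_eq_mul]
    _ = ε * (π / (2 * (π + 1))) := by field_simp
    _ < ε := by
        have h1 : π / (2 * (π + 1)) < 1 := by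
          rw [div_lt_one (by positivity)]; linarith [pi_pos]
        nlinarith

noncomputable def G (n : ℕ) : ℝ := (1 / (n : ℝ)) * ∑ ℓ ∈ Finset.Icc 1 (n - 1), 1 / Real.sin (π * ℓ / n)

lemma G_eq {n : ℕ} (hn : 1 ≤ n) :
    G n = (1 / π) * ((π / n) * ∑ ℓ ∈ Finset.range n, Fc (π * ℓ / n)) - Fc 0 / n
      + (2 / π) * ((harmonic (n - 1) : ℝ)) := by
  have hnR : (0:ℝ) < n := by exact_mod_cast hn
  have hnne : (n:ℝ) ≠ 0 := ne_of_gt hnR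
  have hpi := pi_pos
  have h1 : ∑ ℓ ∈ Finset.Icc 1 (n-1), 1 / Real.sin (π * ℓ / n)
      = ∑ ℓ ∈ Finset.Icc 1 (n-1), Fc (π * ℓ / n)
        + (∑ ℓ ∈ Finset.Icc 1 (n-1), 1 / (π * ℓ / n)
        + ∑ ℓ ∈ Finset.Icc 1 (n-1), 1 / (π - π * ℓ / n)) := by
    rw [← Finset.sum_add_distrib, ← Finset.sum_add_distrib]
    apply Finset.sum_congr rfl
    intro ℓ _
    simp only [Fc]
    ring
  have h2 : ∑ ℓ ∈ Finset.Icc 1 (n-1), 1 / (π - π * ℓ / n)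
      = ∑ ℓ ∈ Finset.Icc 1 (n-1), 1 / (π * ℓ / n) := by
    apply Finset.sum_nbij' (i := fun ℓ => n - ℓ) (j := fun ℓ => n - ℓ)
    · intro a ha; rw [Finset.mem_Icc] at *; omega
    · intro a ha; rw [Finset.mem_Icc] at *; omega
    · intro a ha; rw [Finset.mem_Icc] at ha; omega
    · intro a ha; rw [Finset.mem_Icc] at ha; omega
    · intro a ha
      rw [Finset.mem_Icc] at ha
      have hc : ((n - a : ℕ) : ℝ) = (n : ℝ) - a := by
        rw [Nat.cast_sub (by omega)]
      rw [hc]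
      congr 1
      field_simp
  have h3 : ∑ ℓ ∈ Finset.Icc 1 (n-1), 1 / (π * ℓ / n)
      = (n / π) * ∑ ℓ ∈ Finset.Icc 1 (n-1), (1:ℝ) / ℓ := by
    rw [Finset.mul_sum]
    apply Finset.sum_congr rfl
    intro ℓ hℓ
    rw [Finset.mem_Icc] at hℓ
    have hℓne : (ℓ:ℝ) ≠ 0 := by
      exact_mod_cast Nat.one_le_iff_ne_zero.mp hℓ.1
    field_simp
  have h4 : ∑ ℓ ∈ Finset.Icc 1 (n-1), (1:ℝ) / ℓ = (harmonic (n-1) : ℝ) := by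
    rw [harmonic]
    push_cast
    have hIco : Finset.Icc 1 (n-1) = Finset.Ico 1 n := by
      ext x; simp only [Finset.mem_Icc, Finset.mem_Ico]; omega
    rw [hIco, Finset.sum_Ico_eq_sum_range]
    apply Finset.sum_congr (by congr 1) ?_
    intro i _
    rw [one_div]
    congr 1
    push_cast
    ring
  have h5 : ∑ ℓ ∈ Finset.range n, Fc (π * ℓ / n)
      = Fc 0 + ∑ ℓ ∈ Finset.Icc 1 (n-1), Fc (π * ℓ / n) := by
    have hIco : Finset.Icc 1 (n-1) = Finset.Ico 1 n := by
      ext x; simp only [Finset.mem_Icc, Finset.mem_Ico]; omega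
    rw [Finset.range_eq_Ico, Finset.sum_eq_sum_Ico_succ_bot hn, hIco]
    congr 1
    · norm_num
  have hFsum : ∑ ℓ ∈ Finset.Icc 1 (n-1), Fc (π * ℓ / n)
      = ∑ ℓ ∈ Finset.range n, Fc (π * ℓ / n) - Fc 0 := by rw [h5]; ring
  rw [G, h1, h2, h3, h4, hFsum]
  field_simp
  ring

theorem G_asymptotic :
    Tendsto (fun n : ℕ =>
        G n - (2 / π) * (Real.log n + Real.eulerMascheroniConstant + Real.log (2 / π)))
      atTop (nhds 0) := by
  have hpi := pi_pos
  set R : ℕ → ℝ := fun n => (π / n) * ∑ ℓ ∈ Finset.range n, Fc (π * ℓ / n) with hR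
  have hRlim : Tendsto R atTop (𝓝 (2 * Real.log (2 / π))) := by
    have := riemann_sum_tendsto Fc_contOn
    rwa [integral_Fc] at this
  have hinv : Tendsto (fun n : ℕ => (1:ℝ) / n) atTop (𝓝 0) :=
    tendsto_one_div_atTop_nhds_zero_nat
  have hharm : Tendsto (fun n : ℕ => (harmonic n : ℝ) - Real.log n
      - Real.eulerMascheroniConstant) atTop (𝓝 0) := by
    have := Real.tendsto_harmonic_sub_log.sub_const Real.eulerMascheroniConstant
    simpa using this
  have key : Tendsto (fun n : ℕ =>
      (1 / π) * (R n - 2 * Real.log (2 / π))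
      + (2 / π) * ((harmonic n : ℝ) - Real.log n - Real.eulerMascheroniConstant)
      - Fc 0 * (1 / n) - (2 / π) * (1 / n)) atTop (𝓝 0) := by
    have t1 : Tendsto (fun n : ℕ => (1 / π) * (R n - 2 * Real.log (2 / π))) atTop (𝓝 0) := by
      have := (hRlim.sub_const (2 * Real.log (2 / π))).const_mul (1 / π)
      simpa using this
    have t2 : Tendsto (fun n : ℕ => (2 / π) * ((harmonic n : ℝ) - Real.log n
        - Real.eulerMascheroniConstant)) atTop (𝓝 0) := by
      have := hharm.const_mul (2 / π)
      simpa using this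
    have t3 : Tendsto (fun n : ℕ => Fc 0 * (1 / n)) atTop (𝓝 0) := by
      have := hinv.const_mul (Fc 0)
      simpa using this
    have t4 : Tendsto (fun n : ℕ => (2 / π) * (1 / n)) atTop (𝓝 0) := by
      have := hinv.const_mul (2 / π)
      simpa using this
    have := ((t1.add t2).sub t3).sub t4
    simpa using this
  apply key.congr'
  filter_upwards [eventually_ge_atTop 1] with n hn
  have hnR : (0:ℝ) < n := by exact_mod_cast hn
  have hharm_pred : (harmonic (n - 1) : ℝ) = (harmonic n : ℝ) - 1 / n := by
    have h := harmonic_succ (n - 1)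
    rw [show n - 1 + 1 = n from by omega] at h
    rw [h]
    push_cast
    ring
  rw [G_eq hn, hharm_pred]
  simp only [hR]
  generalize (∑ ℓ ∈ Finset.range n, Fc (π * ↑ℓ / ↑n)) = S
  field_simp
  ring
end

section
/- As n → ∞, (1/(2n)) ∑_{j=1}^{n} 1/sin((2j−1)π/(4n)) = log(n)/π + (log(16/π) + γ)/π + o(1), where γ is the Euler–Mascheroni constant. -/
open Real Filter MeasureTheory intervalIntegral Topology


lemma riemann_mid {f : ℝ → ℝ} {B : ℝ} (hB : 0 < B) (hf : ContinuousOn f (Set.Icc 0 B)) :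
    Tendsto (fun n : ℕ => (B / n) * ∑ j ∈ Finset.Icc 1 n, f ((2 * j - 1) * B / (2 * n)))
      atTop (𝓝 (∫ x in (0:ℝ)..B, f x)) := by
  rw [Metric.tendsto_atTop]
  intro ε hε
  -- uniform continuity
  obtain ⟨δ, hδ, hunif⟩ := (Metric.uniformContinuousOn_iff.mp
    (isCompact_Icc.uniformContinuousOn_of_continuous hf)) (ε / (2 * B)) (by positivity)
  obtain ⟨N, hN⟩ := exists_nat_gt (B / δ)
  refine ⟨N + 1, fun n hn => ?_⟩
  have hn1 : 1 ≤ n := le_trans (Nat.le_add_left 1 N) hn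
  have hn0 : (0:ℝ) < n := by exact_mod_cast Nat.lt_of_lt_of_le Nat.zero_lt_one hn1
  have hBn : B / n < δ := by
    rw [div_lt_iff₀ hn0]
    have : B / δ < n := lt_of_lt_of_le hN (by exact_mod_cast le_trans (Nat.le_succ N) hn)
    rw [div_lt_iff₀ hδ] at this
    linarith
  set t : ℕ → ℝ := fun j => j * B / n with ht
  have htmono : ∀ j k : ℕ, j ≤ k → t j ≤ t k := by
    intro j k hjk
    have hjk' : (j:ℝ) ≤ k := by exact_mod_cast hjk
    simp only [ht]
    gcongr
  have htsub : ∀ j : ℕ, j + 1 ≤ n → Set.uIcc (t j) (t (j+1)) ⊆ Set.Icc 0 B := by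
    intro j hj
    rw [Set.uIcc_of_le (htmono j (j+1) (Nat.le_succ j))]
    apply Set.Icc_subset_Icc
    · simp [ht]; positivity
    · calc t (j+1) ≤ t n := htmono _ _ hj
        _ = B := by simp only [ht]; exact mul_div_cancel_left₀ B hn0.ne'
  have hint : ∀ j : ℕ, j + 1 ≤ n → IntervalIntegrable f volume (t j) (t (j+1)) :=
    fun j hj => (hf.mono (htsub j hj)).intervalIntegrable
  have hsplit : ∫ x in (0:ℝ)..B, f x = ∑ j ∈ Finset.range n, ∫ x in t j..t (j+1), f x := by
    rw [intervalIntegral.sum_integral_adjacent_intervals (fun k hk => hint k hk)]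
    have h0 : t 0 = 0 := by simp [ht]
    have hn' : t n = B := by simp only [ht]; exact mul_div_cancel_left₀ B hn0.ne'
    rw [h0, hn']
  set m : ℕ → ℝ := fun j => (2 * (j:ℝ) + 1) * B / (2 * n) with hm
  have hsum : (B / n) * ∑ j ∈ Finset.Icc 1 n, f ((2 * (j:ℝ) - 1) * B / (2 * n))
      = ∑ j ∈ Finset.range n, (B / n) * f (m j) := by
    rw [Finset.mul_sum, ← Finset.Ico_add_one_right_eq_Icc, Finset.sum_Ico_eq_sum_range]
    simp only [Nat.add_sub_cancel]
    refine Finset.sum_congr rfl (fun j _ => ?_)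
    congr 2
    push_cast
    simp only [hm]
    ring_nf
  have hd : ∀ j : ℕ, t (j+1) - t j = B / n := by
    intro j
    simp only [ht]; rw [← sub_div]; push_cast; congr 1; ring
  have hmem : ∀ j : ℕ, j + 1 ≤ n → m j ∈ Set.Icc (t j) (t (j+1)) := by
    intro j hj
    constructor
    · rw [ht, hm, div_le_div_iff₀ (by positivity) (by positivity)]
      nlinarith [hn0, hB]
    · rw [ht, hm, div_le_div_iff₀ (by positivity) (by positivity)]
      push_cast
      nlinarith [hn0, hB]
  have key : ∀ j : ℕ, j + 1 ≤ n →
      |(B / n) * f (m j) - ∫ x in t j..t (j+1), f x| ≤ (ε / (2 * B)) * (B / n) := by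
    intro j hj
    have hconst : (B / n) * f (m j) = ∫ _ in t j..t (j+1), f (m j) := by
      rw [intervalIntegral.integral_const, hd j, smul_eq_mul]
    rw [hconst, ← intervalIntegral.integral_sub (intervalIntegrable_const) (hint j hj)]
    have := intervalIntegral.norm_integral_le_of_norm_le_const
      (f := fun x => f (m j) - f x) (a := t j) (b := t (j+1)) (C := ε / (2 * B)) ?_
    · rw [Real.norm_eq_abs] at this
      refine this.trans ?_
      rw [abs_of_nonneg (by rw [hd j] at *; positivity)]
      rw [hd j]
    · intro x hx
      have hx' : x ∈ Set.Icc (t j) (t (j+1)) := by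
        have := Set.uIoc_subset_uIcc hx
        rwa [Set.uIcc_of_le (htmono j (j+1) (Nat.le_succ j))] at this
      have hxB : x ∈ Set.Icc 0 B := htsub j hj (by
        rw [Set.uIcc_of_le (htmono j (j+1) (Nat.le_succ j))]; exact hx')
      have hmB : m j ∈ Set.Icc 0 B := htsub j hj (by
        rw [Set.uIcc_of_le (htmono j (j+1) (Nat.le_succ j))]; exact hmem j hj)
      have hdist : dist (m j) x < δ := by
        rw [Real.dist_eq]
        have h1 := (hmem j hj).1
        have h2 := (hmem j hj).2
        have h3 := hx'.1
        have h4 := hx'.2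
        have h5 := hd j
        have : |m j - x| ≤ B / n := by
          rw [abs_le]; constructor <;> linarith
        exact lt_of_le_of_lt this hBn
      have := hunif (m j) hmB x hxB hdist
      rw [Real.dist_eq] at this
      rw [Real.norm_eq_abs]
      exact this.le
  calc dist ((B / n) * ∑ j ∈ Finset.Icc 1 n, f ((2 * (j:ℝ) - 1) * B / (2 * n)))
        (∫ x in (0:ℝ)..B, f x)
      = |∑ j ∈ Finset.range n, ((B / n) * f (m j) - ∫ x in t j..t (j+1), f x)| := by
        rw [Real.dist_eq, hsum, hsplit, ← Finset.sum_sub_distrib]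
    _ ≤ ∑ j ∈ Finset.range n, |(B / n) * f (m j) - ∫ x in t j..t (j+1), f x| :=
        Finset.abs_sum_le_sum_abs _ _
    _ ≤ ∑ _j ∈ Finset.range n, (ε / (2 * B)) * (B / n) :=
        Finset.sum_le_sum (fun j hj => key j (Finset.mem_range.mp hj))
    _ = ε / 2 := by
        rw [Finset.sum_const, Finset.card_range, nsmul_eq_mul]
        field_simp
    _ < ε := by linarith


noncomputable def gg (x : ℝ) : ℝ := if x = 0 then 0 else 1 / Real.sin x - 1 / x

lemma gg_eq {x : ℝ} (hx : x ≠ 0) : gg x = 1 / Real.sin x - 1 / x := if_neg hx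

lemma gg_cont : ContinuousOn gg (Set.Icc 0 (π/2)) := by
  intro x hx
  rcases eq_or_ne x 0 with rfl | hx0
  · -- continuity at 0
    have h0 : gg 0 = 0 := if_pos rfl
    rw [ContinuousWithinAt, h0]
    apply squeeze_zero_norm' (a := fun y => y)
    · filter_upwards [inter_mem_nhdsWithin (Set.Icc 0 (π/2))
        (Metric.ball_mem_nhds (0:ℝ) one_pos)] with y hy
      obtain ⟨⟨hy0, _⟩, hyb⟩ := hy
      rcases eq_or_lt_of_le hy0 with rfl | hy0'
      · simp [gg]
      · have hy1 : y < 1 := by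
          have := mem_ball_iff_norm.mp hyb
          rw [sub_zero, Real.norm_eq_abs, abs_of_pos hy0'] at this
          exact this
        have hsin_lt : Real.sin y < y := Real.sin_lt hy0'
        have hsin_gt : y - y^3/4 < Real.sin y := by have := Real.sin_gt_sub_cube hy0'; nlinarith [pow_pos hy0' 3]
        have hy2 : y^2 ≤ 1 := by nlinarith
        have hy3 : y^3 ≤ y := by nlinarith [mul_le_of_le_one_right hy0'.le hy2]
        have hsin_pos : (3/4) * y < Real.sin y := by nlinarith
        have hspos : 0 < Real.sin y := by nlinarith
        rw [gg_eq hy0'.ne', Real.norm_eq_abs]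
        rw [one_div, one_div, inv_sub_inv hspos.ne' hy0'.ne',
          abs_of_nonneg (div_nonneg (by linarith) (by positivity))]
        rw [div_le_iff₀ (by positivity)]
        nlinarith
    · exact tendsto_id.mono_left nhdsWithin_le_nhds
  · -- continuity away from 0
    have hsin : Real.sin x ≠ 0 := by
      apply ne_of_gt
      apply Real.sin_pos_of_pos_of_lt_pi (lt_of_le_of_ne hx.1 (Ne.symm hx0))
      have := hx.2
      linarith [Real.pi_pos]
    have hc : ContinuousAt (fun y => 1 / Real.sin y - 1 / y) x := by
      apply ContinuousAt.sub
      · exact (continuousAt_const.div Real.continuous_sin.continuousAt hsin)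
      · exact continuousAt_const.div continuousAt_id hx0
    apply ContinuousAt.continuousWithinAt
    apply hc.congr
    filter_upwards [isOpen_ne.mem_nhds hx0] with y hy
    exact (gg_eq hy).symm

lemma primitive_deriv {x : ℝ} (h1 : 0 < x) (h2 : x < π) :
    HasDerivAt (fun y => Real.log (Real.tan (y/2)) - Real.log y)
      (1 / Real.sin x - 1 / x) x := by
  have hc : Real.cos (x/2) ≠ 0 := by
    apply ne_of_gt
    apply Real.cos_pos_of_mem_Ioo
    constructor <;> [linarith [Real.pi_pos]; linarith]
  have hs : 0 < Real.sin (x/2) :=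
    Real.sin_pos_of_pos_of_lt_pi (by linarith) (by linarith [Real.pi_pos])
  have ht : 0 < Real.tan (x/2) := by
    rw [Real.tan_eq_sin_div_cos]
    apply div_pos hs
    cases' hc.lt_or_gt with h h
    · exfalso
      have : Real.cos (x/2) > 0 := by
        apply Real.cos_pos_of_mem_Ioo
        constructor <;> [linarith [Real.pi_pos]; linarith]
      linarith
    · exact h
  have htan : HasDerivAt (fun y : ℝ => Real.tan (y/2)) (1 / Real.cos (x/2) ^ 2 * (1/2)) x :=
    HasDerivAt.comp (h₂ := Real.tan) x (Real.hasDerivAt_tan hc) ((hasDerivAt_id x).div_const 2)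
  have hlog : HasDerivAt (fun y : ℝ => Real.log (Real.tan (y/2)))
      ((Real.tan (x/2))⁻¹ * (1 / Real.cos (x/2) ^ 2 * (1/2))) x :=
    HasDerivAt.comp (h₂ := Real.log) x (Real.hasDerivAt_log ht.ne') htan
  have hval : (Real.tan (x/2))⁻¹ * (1 / Real.cos (x/2) ^ 2 * (1/2)) = 1 / Real.sin x := by
    rw [Real.tan_eq_sin_div_cos]
    have hsinx : Real.sin x = 2 * Real.sin (x/2) * Real.cos (x/2) := by
      nth_rewrite 1 [show x = 2 * (x/2) by ring]
      exact Real.sin_two_mul (x/2)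
    rw [hsinx]
    field_simp
  rw [hval] at hlog
  convert hlog.sub (Real.hasDerivAt_log h1.ne') using 1
  · rfl
  · rfl
  · rfl
  rw [one_div, one_div]

lemma gg_integrable {a b : ℝ} (ha : 0 ≤ a) (hb : b ≤ π/2) (hab : a ≤ b) :
    IntervalIntegrable gg MeasureTheory.volume a b := by
  apply ContinuousOn.intervalIntegrable
  apply gg_cont.mono
  rw [Set.uIcc_of_le hab]
  exact Set.Icc_subset_Icc ha hb

lemma gg_integral_eps {ε : ℝ} (h1 : 0 < ε) (h2 : ε < π/2) :
    ∫ x in ε..(π/2), gg x =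
      (Real.log ε - Real.log (Real.tan (ε/2))) - Real.log (π/2) := by
  have hpi := Real.pi_pos
  rw [intervalIntegral.integral_eq_sub_of_hasDerivAt (f := fun y =>
      Real.log (Real.tan (y/2)) - Real.log y) ?_ ?_]
  · rw [show (π/2)/2 = π/4 by ring, Real.tan_pi_div_four, Real.log_one]
    ring
  · intro x hx
    rw [Set.uIcc_of_le h2.le] at hx
    have hx1 : 0 < x := lt_of_lt_of_le h1 hx.1
    have hx2 : x < π := lt_of_le_of_lt hx.2 (by linarith)
    rw [gg_eq hx1.ne']
    exact primitive_deriv hx1 hx2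
  · exact gg_integrable h1.le le_rfl h2.le

lemma gg_integral : ∫ x in (0:ℝ)..(π/2), gg x = Real.log (4/π) := by
  have hpi := Real.pi_pos
  have hmem : Set.Ioo (0:ℝ) (π/2) ∈ 𝓝[>] (0:ℝ) :=
    Ioo_mem_nhdsGT_of_mem ⟨le_rfl, by linarith⟩
  -- limit 1 : tends to the full integral
  have key1 : Tendsto (fun ε => ∫ x in ε..(π/2), gg x) (𝓝[>] (0:ℝ))
      (𝓝 (∫ x in (0:ℝ)..(π/2), gg x)) := by
    obtain ⟨M, hM⟩ := (isCompact_Icc (a := (0:ℝ)) (b := π/2)).exists_bound_of_continuousOn gg_cont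
    have hdiff : Tendsto (fun ε => ∫ x in (0:ℝ)..ε, gg x) (𝓝[>] (0:ℝ)) (𝓝 0) := by
      apply squeeze_zero_norm' (a := fun ε => M * |ε|)
      · filter_upwards [hmem] with ε hε
        have : ‖∫ x in (0:ℝ)..ε, gg x‖ ≤ M * |ε - 0| := by
          apply intervalIntegral.norm_integral_le_of_norm_le_const
          intro x hx
          rw [Set.uIoc_of_le hε.1.le] at hx
          exact hM x ⟨hx.1.le, hx.2.trans hε.2.le⟩
        simpa using this
      · have : Tendsto (fun ε : ℝ => M * |ε|) (𝓝 0) (𝓝 (M * |0|)) :=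
          (continuous_const.mul (continuous_abs)).tendsto 0
        simpa using this.mono_left nhdsWithin_le_nhds
    have heq : ∀ᶠ ε in 𝓝[>] (0:ℝ), (∫ x in (0:ℝ)..(π/2), gg x) - ∫ x in (0:ℝ)..ε, gg x
        = ∫ x in ε..(π/2), gg x := by
      filter_upwards [hmem] with ε hε
      rw [← intervalIntegral.integral_add_adjacent_intervals
        (gg_integrable le_rfl hε.2.le hε.1.le) (gg_integrable hε.1.le le_rfl hε.2.le)]
      ring
    have := (tendsto_const_nhds (x := ∫ x in (0:ℝ)..(π/2), gg x)
      (f := 𝓝[>] (0:ℝ))).sub hdiff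
    rw [sub_zero] at this
    exact this.congr' heq
  -- limit 2 : explicit value
  have key2 : Tendsto (fun ε => ∫ x in ε..(π/2), gg x) (𝓝[>] (0:ℝ))
      (𝓝 (Real.log (4/π))) := by
    have htan1 : Tendsto (fun y : ℝ => Real.tan y / y) (𝓝[≠] (0:ℝ)) (𝓝 1) := by
      have h : HasDerivAt Real.tan 1 0 := by
        have := Real.hasDerivAt_tan (x := 0) (by simp)
        simpa using this
      rw [hasDerivAt_iff_tendsto_slope] at h
      apply h.congr
      intro y
      simp [slope_def_field]
    have hhalf : Tendsto (fun ε : ℝ => ε/2) (𝓝[>] (0:ℝ)) (𝓝[≠] (0:ℝ)) := by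
      apply tendsto_nhdsWithin_of_tendsto_nhds_of_eventually_within
      · have h0 : Tendsto (fun ε : ℝ => ε/2) (𝓝 (0:ℝ)) (𝓝 ((0:ℝ)/2)) := tendsto_id.div_const 2
        simpa using h0.mono_left nhdsWithin_le_nhds
      · filter_upwards [self_mem_nhdsWithin] with ε (hε : 0 < ε)
        simp only [Set.mem_compl_iff, Set.mem_singleton_iff]
        positivity
    have hratio : Tendsto (fun ε : ℝ => Real.tan (ε/2) / (ε/2)) (𝓝[>] (0:ℝ)) (𝓝 1) :=
      htan1.comp hhalf
    have hinv : Tendsto (fun ε : ℝ => ε / Real.tan (ε/2)) (𝓝[>] (0:ℝ)) (𝓝 2) := by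
      have h2 : Tendsto (fun ε : ℝ => 2 / (Real.tan (ε/2) / (ε/2))) (𝓝[>] (0:ℝ)) (𝓝 2) := by
        have h2' := (tendsto_const_nhds (x := (2:ℝ)) (f := 𝓝[>] (0:ℝ))).div hratio one_ne_zero
        rwa [div_one] at h2'
      apply h2.congr'
      filter_upwards [hmem] with ε hε
      have hε2 : 0 < ε/2 := by linarith [hε.1]
      have htanpos : 0 < Real.tan (ε/2) := Real.tan_pos_of_pos_of_lt_pi_div_two hε2 (by linarith [hε.2])
      field_simp
    have hlog : Tendsto (fun ε : ℝ => Real.log (ε / Real.tan (ε/2))) (𝓝[>] (0:ℝ))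
        (𝓝 (Real.log 2)) := ((Real.continuousAt_log two_ne_zero).tendsto.comp hinv)
    have : Tendsto (fun ε : ℝ => Real.log (ε / Real.tan (ε/2)) - Real.log (π/2)) (𝓝[>] (0:ℝ))
        (𝓝 (Real.log 2 - Real.log (π/2))) := hlog.sub tendsto_const_nhds
    have hval : Real.log 2 - Real.log (π/2) = Real.log (4/π) := by
      rw [Real.log_div (by norm_num : (4:ℝ) ≠ 0) (ne_of_gt hpi),
        Real.log_div (ne_of_gt hpi) two_ne_zero,
        show (4:ℝ) = 2^2 by norm_num, Real.log_pow]
      push_cast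
      ring
    rw [hval] at this
    apply this.congr'
    filter_upwards [hmem] with ε hε
    have hε2 : 0 < ε/2 := by linarith [hε.1]
    have htanpos : 0 < Real.tan (ε/2) := Real.tan_pos_of_pos_of_lt_pi_div_two hε2 (by linarith [hε.2])
    rw [gg_integral_eps hε.1 hε.2, Real.log_div (ne_of_gt hε.1) (ne_of_gt htanpos)]
  exact tendsto_nhds_unique key1 key2


lemma odd_harmonic_sum (n : ℕ) : ∑ j ∈ Finset.Icc 1 n, (1:ℝ)/(2*(j:ℝ)-1)
    = (harmonic (2*n) : ℝ) - (harmonic n : ℝ)/2 := by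
  induction n with
  | zero => simp
  | succ n ih =>
    rw [Finset.sum_Icc_succ_top (by omega), ih,
      show 2 * (n+1) = (2*n+1)+1 by ring, harmonic_succ, harmonic_succ, harmonic_succ]
    push_cast
    have h1 : (2:ℝ)*n+1 ≠ 0 := by positivity
    have h2 : (2:ℝ)*n+1+1 ≠ 0 := by positivity
    have h3 : (n:ℝ)+1 ≠ 0 := by positivity
    have h4 : (2:ℝ)*((n:ℝ)+1)-1 = 2*n+1 := by ring
    rw [h4]
    field_simp
    ring


theorem odd_csc_sum_asymptotic :
    Tendsto (fun n : ℕ =>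
        (1 / (2 * (n : ℝ))) * ∑ j ∈ Finset.Icc 1 n, 1 / Real.sin ((2 * (j : ℝ) - 1) * π / (4 * n)) -
          (Real.log n / π + (Real.log (16 / π) + Real.eulerMascheroniConstant) / π))
      atTop (nhds 0) := by
  have hpi := Real.pi_pos
  set γ := Real.eulerMascheroniConstant with hγ
  have hR : Tendsto (fun n : ℕ =>
      ((π/2) / n) * ∑ j ∈ Finset.Icc 1 n, gg ((2 * (j:ℝ) - 1) * (π/2) / (2 * n)))
      atTop (𝓝 (Real.log (4/π))) := by
    have := riemann_mid (B := π/2) (by linarith) gg_cont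
    rwa [gg_integral] at this
  have hv : Tendsto (fun n : ℕ => (harmonic n : ℝ) - Real.log n) atTop (𝓝 γ) :=
    Real.tendsto_harmonic_sub_log
  have hdouble : Tendsto (fun n : ℕ => 2 * n) atTop atTop :=
    tendsto_atTop_mono (fun n => Nat.le_mul_of_pos_left n (by norm_num)) tendsto_id
  have hu : Tendsto (fun n : ℕ => (harmonic (2*n) : ℝ) - Real.log (2*n : ℕ)) atTop (𝓝 γ) :=
    hv.comp hdouble
  have hcomb : Tendsto (fun n : ℕ =>
      (2/π) * ((harmonic (2*n):ℝ) - Real.log (2*n : ℕ))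
      - (1/π) * ((harmonic n:ℝ) - Real.log n)
      + (1/π) * (((π/2)/n) * ∑ j ∈ Finset.Icc 1 n, gg ((2*(j:ℝ)-1)*(π/2)/(2*n)))
      + ((2/π) * Real.log 2 - (Real.log (16/π) + γ)/π)) atTop
      (𝓝 ((2/π)*γ - (1/π)*γ + (1/π)*Real.log (4/π)
        + ((2/π)*Real.log 2 - (Real.log (16/π)+γ)/π))) :=
    ((((hu.const_mul _).sub (hv.const_mul _)).add (hR.const_mul _)).add tendsto_const_nhds)
  have hzero : (2/π)*γ - (1/π)*γ + (1/π)*Real.log (4/π)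
      + ((2/π)*Real.log 2 - (Real.log (16/π)+γ)/π) = 0 := by
    have h4 : Real.log (4/π) = 2*Real.log 2 - Real.log π := by
      rw [Real.log_div (by norm_num : (4:ℝ) ≠ 0) (ne_of_gt hpi),
        show (4:ℝ) = 2^2 by norm_num, Real.log_pow]
      push_cast; ring
    have h16 : Real.log (16/π) = 4*Real.log 2 - Real.log π := by
      rw [Real.log_div (by norm_num : (16:ℝ) ≠ 0) (ne_of_gt hpi),
        show (16:ℝ) = 2^4 by norm_num, Real.log_pow]
      push_cast; ring
    rw [h4, h16]
    field_simp
    ring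
  rw [hzero] at hcomb
  apply hcomb.congr'
  filter_upwards [eventually_ge_atTop 1] with n hn
  have hn0 : (0:ℝ) < n := by exact_mod_cast Nat.lt_of_lt_of_le Nat.zero_lt_one hn
  -- rewrite the csc sum
  have hsum : ∑ j ∈ Finset.Icc 1 n, 1 / Real.sin ((2 * (j : ℝ) - 1) * π / (4 * n))
      = (∑ j ∈ Finset.Icc 1 n, gg ((2*(j:ℝ)-1)*(π/2)/(2*n)))
        + (4*n/π) * ∑ j ∈ Finset.Icc 1 n, (1:ℝ)/(2*(j:ℝ)-1) := by
    rw [Finset.mul_sum, ← Finset.sum_add_distrib]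
    refine Finset.sum_congr rfl (fun j hj => ?_)
    have hj1 : 1 ≤ j := (Finset.mem_Icc.mp hj).1
    have hj1' : (1:ℝ) ≤ j := by exact_mod_cast hj1
    have hjpos : (0:ℝ) < 2*(j:ℝ)-1 := by linarith
    have harg : (2*(j:ℝ)-1)*(π/2)/(2*n) = (2 * (j : ℝ) - 1) * π / (4 * n) := by
      field_simp
      ring
    have hne : (2 * (j : ℝ) - 1) * π / (4 * n) ≠ 0 := by positivity
    rw [harg, gg_eq hne]
    have : 1 / ((2 * (j : ℝ) - 1) * π / (4 * n)) = 4*n/π * (1/(2*(j:ℝ)-1)) := by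
      field_simp
    rw [this]
    ring
  have hlog2n : Real.log (2*n : ℕ) = Real.log 2 + Real.log n := by
    push_cast
    rw [Real.log_mul two_ne_zero (ne_of_gt hn0)]
  rw [hsum, odd_harmonic_sum, hlog2n]
  field_simp
  ring
end

section
/- For integers 1 ≤ j ≤ n with j ≥ 2, ∑_{k=1}^{j−2} 1/(√(j−k)·√(n−k)) ≤ log(4n/(n−j+1)). -/
open Real

lemma key_term_bound (x y : ℝ) (hx : 2 ≤ x) (hxy : x ≤ y) :
    1 / (Real.sqrt x * Real.sqrt y) ≤
      2 * Real.log (Real.sqrt x + Real.sqrt y)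
        - 2 * Real.log (Real.sqrt (x - 1) + Real.sqrt (y - 1)) := by
  have hx0 : (0:ℝ) < x := by linarith
  have hy0 : (0:ℝ) < y := by linarith
  have hx1 : (0:ℝ) < x - 1 := by linarith
  have hy1 : (0:ℝ) < y - 1 := by linarith
  set sx := Real.sqrt x with hsx
  set sy := Real.sqrt y with hsy
  set tx := Real.sqrt (x - 1) with htx
  set ty := Real.sqrt (y - 1) with hty
  have hsxp : 0 < sx := Real.sqrt_pos.mpr hx0
  have hsyp : 0 < sy := Real.sqrt_pos.mpr hy0
  have htxp : 0 < tx := Real.sqrt_pos.mpr hx1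
  have htyp : 0 < ty := Real.sqrt_pos.mpr hy1
  have hsx2 : sx ^ 2 = x := Real.sq_sqrt hx0.le
  have hsy2 : sy ^ 2 = y := Real.sq_sqrt hy0.le
  have htx2 : tx ^ 2 = x - 1 := Real.sq_sqrt hx1.le
  have hty2 : ty ^ 2 = y - 1 := Real.sq_sqrt hy1.le
  have htxsx : tx ≤ sx := Real.sqrt_le_sqrt (by linarith)
  have htysy : ty ≤ sy := Real.sqrt_le_sqrt (by linarith)
  have ha : 0 < sx + sy := by linarith
  have hb : 0 < tx + ty := by linarith
  -- log bound : log(b/a) ≤ b/a - 1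
  have hlog : Real.log ((tx + ty) / (sx + sy)) ≤ (tx + ty) / (sx + sy) - 1 :=
    Real.log_le_sub_one_of_pos (by positivity)
  rw [Real.log_div hb.ne' ha.ne'] at hlog
  -- key algebraic inequality
  have h1 : 1 ≤ 2 * sx * (sx - tx) := by nlinarith [sq_nonneg (sx - tx)]
  have h2 : 1 ≤ 2 * sy * (sy - ty) := by nlinarith [sq_nonneg (sy - ty)]
  have h3 : sx + sy ≤ 2 * ((sx + sy) - (tx + ty)) * (sx * sy) := by
    nlinarith [mul_le_mul_of_nonneg_left h1 hsyp.le,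
      mul_le_mul_of_nonneg_left h2 hsxp.le]
  have h4 : 1 / (sx * sy) ≤ 2 * (1 - (tx + ty) / (sx + sy)) := by
    rw [div_le_iff₀ (by positivity)]
    have h5 : (tx + ty) / (sx + sy) * (sx + sy) = tx + ty :=
      div_mul_cancel₀ _ ha.ne'
    have h6 : (2 * (1 - (tx + ty) / (sx + sy)) * (sx * sy)) * (sx + sy)
        = 2 * ((sx + sy) - (tx + ty)) * (sx * sy) := by
      field_simp
    have h7 : 1 * (sx + sy) ≤ (2 * (1 - (tx + ty) / (sx + sy)) * (sx * sy)) * (sx + sy) := by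
      rw [h6]; linarith
    exact le_of_mul_le_mul_right (by linarith) ha
  linarith

theorem double_sqrt_sum_bound (n j : ℕ) (h2 : 2 ≤ j) (hjn : j ≤ n) :
    ∑ k ∈ Finset.Icc 1 (j - 2), 1 / (Real.sqrt ((j : ℝ) - k) * Real.sqrt ((n : ℝ) - k)) ≤
      Real.log (4 * (n : ℝ) / ((n : ℝ) - j + 1)) := by
  have hjR : (2:ℝ) ≤ (j:ℝ) := by exact_mod_cast h2
  have hnR : (j:ℝ) ≤ (n:ℝ) := by exact_mod_cast hjn
  set g : ℕ → ℝ := fun k =>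
    2 * Real.log (Real.sqrt ((j : ℝ) - k) + Real.sqrt ((n : ℝ) - k)) with hg
  -- Step 1: termwise bound
  have step1 : ∑ k ∈ Finset.Icc 1 (j - 2), 1 / (Real.sqrt ((j : ℝ) - k) * Real.sqrt ((n : ℝ) - k))
      ≤ ∑ k ∈ Finset.Icc 1 (j - 2), (g k - g (k + 1)) := by
    apply Finset.sum_le_sum
    intro k hk
    rw [Finset.mem_Icc] at hk
    have hk2 : k + 2 ≤ j := by omega
    have hkR : (k:ℝ) + 2 ≤ (j:ℝ) := by exact_mod_cast hk2
    have := key_term_bound ((j:ℝ) - k) ((n:ℝ) - k) (by linarith) (by linarith)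
    simp only [hg, Nat.cast_add, Nat.cast_one]
    convert this using 4
    · rfl
    · rw [show (j:ℝ) - ((k:ℝ) + 1) = (j:ℝ) - k - 1 by ring, show (n:ℝ) - ((k:ℝ) + 1) = (n:ℝ) - k - 1 by ring]
  -- Step 2: telescoping
  have step2 : ∑ k ∈ Finset.Icc 1 (j - 2), (g k - g (k + 1)) = g 1 - g (j - 1) := by
    have hIcc : Finset.Icc 1 (j - 2) = Finset.Ico 1 (j - 1) := by
      have : j - 1 = (j - 2) + 1 := by omega
      rw [this, Finset.Ico_add_one_right_eq_Icc]
    rw [hIcc, Finset.sum_Ico_eq_sum_range]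
    have h11 : j - 1 - 1 = j - 2 := by omega
    rw [h11]
    have := Finset.sum_range_sub' (fun i => g (1 + i)) (j - 2)
    simp only [add_comm 1] at this ⊢
    rw [show (fun i => g (i + 1) - g (i + 1 + 1)) = (fun i => g (i + 1) - g ((i + 1) + 1)) from rfl]
    rw [this]
    congr 2
    omega
  -- Step 3: final comparison
  have step3 : g 1 - g (j - 1) ≤ Real.log (4 * (n : ℝ) / ((n : ℝ) - j + 1)) := by
    have hcast : ((j - 1 : ℕ) : ℝ) = (j : ℝ) - 1 := by
      have : 1 ≤ j := by omega
      push_cast [this]; ring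
    have hD : (1:ℝ) ≤ (n:ℝ) - j + 1 := by linarith
    have hD0 : (0:ℝ) < (n:ℝ) - j + 1 := by linarith
    set A := Real.sqrt ((j:ℝ) - 1) + Real.sqrt ((n:ℝ) - 1) with hA
    set B := 1 + Real.sqrt ((n:ℝ) - j + 1) with hB
    have hgj : g (j - 1) = 2 * Real.log B := by
      simp only [hg, hcast]
      congr 2
      · rw [show (j:ℝ) - ((j:ℝ) - 1) = 1 by ring, Real.sqrt_one,
          show (n:ℝ) - ((j:ℝ) - 1) = (n:ℝ) - j + 1 by ring]
    have hg1 : g 1 = 2 * Real.log A := by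
      simp only [hg, Nat.cast_one]
      rfl
    rw [hg1, hgj]
    have hApos : 0 < A := by
      have : 0 < Real.sqrt ((j:ℝ) - 1) := Real.sqrt_pos.mpr (by linarith)
      have h2' : 0 ≤ Real.sqrt ((n:ℝ) - 1) := Real.sqrt_nonneg _
      linarith
    have hBpos : 0 < B := by
      have : 0 ≤ Real.sqrt ((n:ℝ) - j + 1) := Real.sqrt_nonneg _
      linarith
    have hlogA : 2 * Real.log A = Real.log (A ^ 2) := by
      rw [Real.log_pow]; push_cast; ring
    have hlogB : 2 * Real.log B = Real.log (B ^ 2) := by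
      rw [Real.log_pow]; push_cast; ring
    rw [hlogA, hlogB, ← Real.log_div (by positivity) (by positivity)]
    apply Real.log_le_log (by positivity)
    have hA2 : A ^ 2 ≤ 4 * (n:ℝ) := by
      have h1' : Real.sqrt ((j:ℝ) - 1) ≤ Real.sqrt (n:ℝ) := Real.sqrt_le_sqrt (by linarith)
      have h2' : Real.sqrt ((n:ℝ) - 1) ≤ Real.sqrt (n:ℝ) := Real.sqrt_le_sqrt (by linarith)
      have h3' : Real.sqrt (n:ℝ) ^ 2 = (n:ℝ) := Real.sq_sqrt (by linarith)
      nlinarith [Real.sqrt_nonneg ((j:ℝ) - 1), Real.sqrt_nonneg ((n:ℝ) - 1),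
        Real.sqrt_nonneg (n:ℝ)]
    have hB2 : (n:ℝ) - j + 1 ≤ B ^ 2 := by
      have h3' : Real.sqrt ((n:ℝ) - j + 1) ^ 2 = (n:ℝ) - j + 1 := Real.sq_sqrt (by linarith)
      nlinarith [Real.sqrt_nonneg ((n:ℝ) - j + 1)]
    exact div_le_div₀ (by positivity) hA2 hD0 hB2
  linarith
end
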